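/- arXiv:2511.01152 — 6 statements merged into one kernel-verified Lean document; each statement's English description precedes it below -/
import Mathlib

section
/- Let 0 < α ≤ 1/2, let f be analytic on the unit disk with ‖f‖ := sup_{z∈𝔻}(1-|z|²)^α|f(z)| < ∞, and for t ≥ 0 define S_t f(z) = w_t(z) f(φ_t(z)) where w_t(z) = e^{-t}/(1-(1-e^{-t})z) and φ_t(z) = e^{-t}z/(1-(1-e^{-t})z). Then sup_{z∈𝔻}(1-|z|²)^α|S_t f(z)| ≤ e^{-αt} ‖f‖. -/
theorem cesaro_stmt_8 (α : ℝ) (hα : 0 < α) (hα2 : α ≤ 1 / 2)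
    (f : ℂ → ℂ) (hf : DifferentiableOn ℂ f (Metric.ball 0 1))
    (hbdd : BddAbove {y : ℝ | ∃ z : ℂ, ‖z‖ < 1 ∧ y = (1 - ‖z‖ ^ 2) ^ α * ‖f z‖})
    (t : ℝ) (ht : 0 ≤ t) (z : ℂ) (hz : ‖z‖ < 1) :
    (1 - ‖z‖ ^ 2) ^ α *
        ‖(Real.exp (-t) : ℂ) / (1 - (1 - (Real.exp (-t) : ℂ)) * z) *
          f ((Real.exp (-t) : ℂ) * z / (1 - (1 - (Real.exp (-t) : ℂ)) * z))‖ ≤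
      Real.exp (-α * t) *
        sSup {y : ℝ | ∃ w : ℂ, ‖w‖ < 1 ∧ y = (1 - ‖w‖ ^ 2) ^ α * ‖f w‖} := by
  set M := sSup {y : ℝ | ∃ w : ℂ, ‖w‖ < 1 ∧ y = (1 - ‖w‖ ^ 2) ^ α * ‖f w‖} with hM_def
  set s := Real.exp (-t) with hs_def
  have hs0 : 0 < s := Real.exp_pos _
  have hs1 : s ≤ 1 := Real.exp_le_one_iff.mpr (by linarith)
  have hz0 : 0 ≤ ‖z‖ := norm_nonneg z
  set D : ℂ := 1 - (1 - (s:ℂ)) * z with hD_def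
  have h1s : ‖(1 - (s:ℂ))‖ = 1 - s := by
    rw [show (1 - (s:ℂ)) = ((1 - s : ℝ) : ℂ) by push_cast; ring]
    rw [Complex.norm_real, Real.norm_eq_abs, abs_of_nonneg (by linarith)]
  have hDlb : 1 - (1 - s) * ‖z‖ ≤ ‖D‖ := by
    have h := norm_sub_norm_le (1 : ℂ) ((1 - (s:ℂ)) * z)
    rw [norm_mul, h1s, norm_one] at h
    exact h
  have hDs : s ≤ ‖D‖ := le_trans (by nlinarith) hDlb
  have hD0 : (0:ℝ) < ‖D‖ := lt_of_lt_of_le hs0 hDs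
  have hDne : D ≠ 0 := by
    intro h; rw [h, norm_zero] at hD0; exact lt_irrefl _ hD0
  set φ : ℂ := (s:ℂ) * z / D with hφ_def
  have hφnorm : ‖φ‖ = s * ‖z‖ / ‖D‖ := by
    rw [hφ_def, norm_div, norm_mul, Complex.norm_real, Real.norm_eq_abs, abs_of_pos hs0]
  have hszD : s * ‖z‖ < ‖D‖ := by
    have : s * ‖z‖ < 1 - (1 - s) * ‖z‖ := by nlinarith
    linarith
  have hφlt : ‖φ‖ < 1 := by
    rw [hφnorm, div_lt_one hD0]; exact hszD
  have hφ0 : 0 ≤ ‖φ‖ := norm_nonneg _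
  have h1φ : 0 < 1 - ‖φ‖ ^ 2 := by nlinarith
  have h1z : 0 < 1 - ‖z‖ ^ 2 := by nlinarith
  -- the key Schwarz-Pick type inequality
  have hDsq : ‖D‖ ^ 2 - s ^ 2 * ‖z‖ ^ 2 ≥ s * (1 - ‖z‖ ^ 2) := by
    have hnD : ‖D‖ ^ 2 = D.re ^ 2 + D.im ^ 2 := by
      rw [Complex.sq_norm, Complex.normSq_apply]; ring
    have hnz : ‖z‖ ^ 2 = z.re ^ 2 + z.im ^ 2 := by
      rw [Complex.sq_norm, Complex.normSq_apply]; ring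
    have hDre : D.re = 1 - (1 - s) * z.re := by
      simp [hD_def, Complex.sub_re, Complex.mul_re, Complex.sub_im]
    have hDim : D.im = -((1 - s) * z.im) := by
      simp [hD_def, Complex.sub_im, Complex.mul_im, Complex.sub_re]
    rw [hnD, hnz, hDre, hDim]
    nlinarith [sq_nonneg (1 - z.re), sq_nonneg z.im, mul_nonneg (sub_nonneg.mpr hs1) (sq_nonneg (1 - z.re)), mul_nonneg (sub_nonneg.mpr hs1) (sq_nonneg z.im)]
  have hkey : s * (1 - ‖z‖ ^ 2) / ‖D‖ ^ 2 ≤ 1 - ‖φ‖ ^ 2 := by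
    rw [hφnorm, div_pow, div_le_iff₀ (by positivity)]
    have hD2 : (0:ℝ) < ‖D‖ ^ 2 := by positivity
    have he : (1 - (s * ‖z‖) ^ 2 / ‖D‖ ^ 2) * ‖D‖ ^ 2 = ‖D‖ ^ 2 - (s * ‖z‖) ^ 2 := by
      rw [sub_mul, div_mul_cancel₀ _ (ne_of_gt hD2), one_mul]
    rw [he]; nlinarith
  -- bound on f at φ
  have hMf : (1 - ‖φ‖ ^ 2) ^ α * ‖f φ‖ ≤ M := le_csSup hbdd ⟨φ, hφlt, rfl⟩
  have hN : 0 ≤ ‖f φ‖ := norm_nonneg _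
  -- exponent algebra: s^(2α)/‖D‖^(2α) ≥ s/‖D‖
  have hkey2 : s * ‖D‖ ^ (2 * α) ≤ s ^ (2 * α) * ‖D‖ := by
    have h1 : s ^ ((1:ℝ) - 2 * α) ≤ ‖D‖ ^ ((1:ℝ) - 2 * α) :=
      Real.rpow_le_rpow hs0.le hDs (by linarith)
    have e1 : s ^ ((1:ℝ) - 2 * α) * s ^ (2 * α) = s := by
      rw [← Real.rpow_add hs0]; norm_num
    have e2 : ‖D‖ ^ ((1:ℝ) - 2 * α) * ‖D‖ ^ (2 * α) = ‖D‖ := by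
      rw [← Real.rpow_add hD0]; norm_num
    calc s * ‖D‖ ^ (2 * α) = s ^ ((1:ℝ) - 2 * α) * s ^ (2 * α) * ‖D‖ ^ (2 * α) := by rw [e1]
      _ ≤ ‖D‖ ^ ((1:ℝ) - 2 * α) * s ^ (2 * α) * ‖D‖ ^ (2 * α) :=
          mul_le_mul_of_nonneg_right
            (mul_le_mul_of_nonneg_right h1 (Real.rpow_nonneg hs0.le _))
            (Real.rpow_nonneg (norm_nonneg D) _)
      _ = s ^ (2 * α) * ‖D‖ := by rw [mul_right_comm, e2, mul_comm]
  -- rewrite the norm on the left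
  have hLHS : ‖(s:ℂ) / D * f φ‖ = s / ‖D‖ * ‖f φ‖ := by
    rw [norm_mul, norm_div, Complex.norm_real, Real.norm_eq_abs, abs_of_pos hs0]
  have hexp : Real.exp (-α * t) = s ^ α := by
    show Real.exp (-α * t) = Real.exp (-t) ^ α
    rw [← Real.exp_mul]
    congr 1; ring
  rw [hexp, hLHS]
  -- main chain
  have hchain1 : s ^ α * ((s * (1 - ‖z‖ ^ 2) / ‖D‖ ^ 2) ^ α * ‖f φ‖) ≤ s ^ α * M := by
    have h2 : (s * (1 - ‖z‖ ^ 2) / ‖D‖ ^ 2) ^ α ≤ (1 - ‖φ‖ ^ 2) ^ α :=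
      Real.rpow_le_rpow (by positivity) hkey hα.le
    have : (s * (1 - ‖z‖ ^ 2) / ‖D‖ ^ 2) ^ α * ‖f φ‖ ≤ M :=
      le_trans (mul_le_mul_of_nonneg_right h2 hN) hMf
    exact mul_le_mul_of_nonneg_left this (Real.rpow_nonneg hs0.le α)
  refine le_trans ?_ hchain1
  -- expand the rpow of the quotient
  have hexpand : (s * (1 - ‖z‖ ^ 2) / ‖D‖ ^ 2) ^ α
      = s ^ α * (1 - ‖z‖ ^ 2) ^ α / ‖D‖ ^ (2 * α) := by
    rw [Real.div_rpow (by positivity) (by positivity), Real.mul_rpow hs0.le h1z.le]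
    congr 1
    rw [← Real.rpow_natCast ‖D‖ 2, ← Real.rpow_mul (norm_nonneg D)]
    norm_num
  rw [hexpand]
  have hsα2 : s ^ α * s ^ α = s ^ (2 * α) := by
    rw [← Real.rpow_add hs0]; ring_nf
  have hfinal : s / ‖D‖ ≤ s ^ (2 * α) / ‖D‖ ^ (2 * α) := by
    rw [div_le_div_iff₀ hD0 (Real.rpow_pos_of_pos hD0 _)]
    exact hkey2
  calc (1 - ‖z‖ ^ 2) ^ α * (s / ‖D‖ * ‖f φ‖)
      ≤ (1 - ‖z‖ ^ 2) ^ α * (s ^ (2 * α) / ‖D‖ ^ (2 * α) * ‖f φ‖) := by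
        have h0 : (0:ℝ) ≤ (1 - ‖z‖ ^ 2) ^ α := Real.rpow_nonneg h1z.le α
        exact mul_le_mul_of_nonneg_left (mul_le_mul_of_nonneg_right hfinal hN) h0
    _ = s ^ α * (s ^ α * (1 - ‖z‖ ^ 2) ^ α / ‖D‖ ^ (2 * α) * ‖f φ‖) := by
        rw [← hsα2]; ring
end

section
/- For 0 < α ≤ 1/2, the Cesàro operator 𝒞f(z) = (1/z)∫₀^z f(ξ)/(1-ξ) dξ is bounded on the Korenblum space H^∞_α = {f analytic on 𝔻 : sup_{z∈𝔻}(1-|z|²)^α|f(z)| < ∞}, and its operator norm equals 1/α. -/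
open intervalIntegral Set Filter

/-- The Cesàro operator `𝒞f(z) = ∫₀¹ f(tz)/(1-tz) dt`. -/
noncomputable def cesaro (f : ℂ → ℂ) (z : ℂ) : ℂ :=
  ∫ t in (0 : ℝ)..1, f ((t : ℂ) * z) / (1 - (t : ℂ) * z)

/-- The Korenblum space `H^∞_α` norm: `sup_{z ∈ 𝔻} (1-|z|²)^α |f(z)|`. -/
noncomputable def korenblumNorm (α : ℝ) (f : ℂ → ℂ) : ℝ :=
  sSup {y : ℝ | ∃ z : ℂ, ‖z‖ < 1 ∧ y = (1 - ‖z‖ ^ 2) ^ α * ‖f z‖}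

lemma key_ineq (α : ℝ) (hα : 0 < α) (hα2 : α ≤ 1/2) (r : ℝ) (hr0 : 0 ≤ r) (hr1 : r < 1) :
    ∫ t in (0:ℝ)..1, ((1 - (t*r)^2) ^ α * (1 - t*r))⁻¹ ≤ (1/α) * ((1 - r^2) ^ α)⁻¹ := by
  have hpos : ∀ t ∈ Icc (0:ℝ) 1, 0 < 1 - t*r ∧ 0 < 1 - (t*r)^2 := by
    intro t ht
    obtain ⟨ht0, ht1⟩ := ht
    have hx : 0 ≤ t*r := mul_nonneg ht0 hr0
    have hx1 : t*r < 1 := lt_of_le_of_lt (by nlinarith) hr1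
    constructor <;> nlinarith
  set D : ℝ → ℝ := fun t => (1 - (t*r)^2) ^ (-α) + 2*α*t^2*r^2 * (1 - (t*r)^2) ^ (-α-1) with hD
  have hderiv : ∀ t ∈ uIcc (0:ℝ) 1, HasDerivAt (fun t => t * (1 - (t*r)^2) ^ (-α)) (D t) t := by
    intro t ht
    rw [uIcc_of_le zero_le_one] at ht
    have hb := (hpos t ht).2
    have h1 : HasDerivAt (fun t : ℝ => 1 - (t*r)^2) (-(2*t*r^2)) t := by
      have h0 : HasDerivAt (fun t : ℝ => (t*r)^2) ((2:ℕ)*(t*r)^(2-1)*(1*r)) t :=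
        (((hasDerivAt_id t).mul_const r)).pow 2
      have := h0.const_sub 1
      exact this.congr_deriv (by push_cast; ring)
    have h2 := HasDerivAt.rpow_const (p := -α) h1 (Or.inl hb.ne')
    have h3 : HasDerivAt (fun t => t * (1 - (t*r)^2) ^ (-α)) _ t := (hasDerivAt_id t).mul h2
    convert h3 using 1
    simp only [hD, id_eq]
    ring
  have hcontD : IntervalIntegrable D MeasureTheory.volume 0 1 := by
    apply ContinuousOn.intervalIntegrable
    rw [uIcc_of_le zero_le_one]
    intro t ht
    have hb := (hpos t ht).2
    have hbase : ContinuousAt (fun t : ℝ => 1 - (t*r)^2) t := by fun_prop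
    have c1 : ContinuousAt (fun t : ℝ => (1 - (t*r)^2) ^ (-α)) t :=
      hbase.rpow_const (Or.inl hb.ne')
    have c2 : ContinuousAt (fun t : ℝ => (1 - (t*r)^2) ^ (-α-1)) t :=
      hbase.rpow_const (Or.inl hb.ne')
    exact (c1.add ((by fun_prop : ContinuousAt (fun t : ℝ => 2*α*t^2*r^2) t).mul c2)).continuousWithinAt
  have hcontI : IntervalIntegrable (fun t => ((1 - (t*r)^2) ^ α * (1 - t*r))⁻¹) MeasureTheory.volume 0 1 := by
    apply ContinuousOn.intervalIntegrable
    rw [uIcc_of_le zero_le_one]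
    intro t ht
    obtain ⟨h1, h2⟩ := hpos t ht
    have hbase : ContinuousAt (fun t : ℝ => 1 - (t*r)^2) t := by fun_prop
    have c1 : ContinuousAt (fun t : ℝ => (1 - (t*r)^2) ^ α) t :=
      hbase.rpow_const (Or.inl h2.ne')
    have hne : (1 - (t*r)^2) ^ α * (1 - t*r) ≠ 0 :=
      (mul_pos (Real.rpow_pos_of_pos h2 α) h1).ne'
    exact ((c1.mul (by fun_prop)).inv₀ hne).continuousWithinAt
  have hptwise : ∀ t ∈ Icc (0:ℝ) 1, α * ((1 - (t*r)^2) ^ α * (1 - t*r))⁻¹ ≤ D t := by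
    intro t ht
    obtain ⟨h1, h2⟩ := hpos t ht
    have hxx : t^2*r^2 = (t*r)^2 := by ring
    set x := t*r with hx
    have hx0 : 0 ≤ x := mul_nonneg ht.1 hr0
    have hx1 : x ≤ 1 := by nlinarith [ht.2, hr1]
    have hA : 0 < (1 - x^2) ^ α := Real.rpow_pos_of_pos h2 α
    have e1 : (1 - x^2) ^ (-α) = ((1 - x^2) ^ α)⁻¹ := Real.rpow_neg h2.le α
    have e2 : (1 - x^2) ^ (-α-1) = ((1 - x^2) ^ α * (1 - x^2))⁻¹ := by
      rw [show -α-1 = -α + (-1) by ring, Real.rpow_add h2, Real.rpow_neg_one, e1, mul_inv]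
    simp only [hD]
    rw [show 2*α*t^2*r^2 = 2*α*x^2 by rw [hx]; ring, e1, e2]
    have key : α * (1 + x) ≤ 1 - x^2 + 2*α*x^2 := by
      nlinarith [mul_nonneg (sub_nonneg.2 hx1) (by nlinarith : (0:ℝ) ≤ (1-α)+(1-2*α)*x)]
    clear_value x
    field_simp
    nlinarith [mul_le_mul_of_nonneg_right key h1.le]
  -- FTC
  have hFTC : ∫ t in (0:ℝ)..1, D t = (1 - r^2) ^ (-α) := by
    rw [integral_eq_sub_of_hasDerivAt hderiv hcontD]
    norm_num
  have hmono := integral_mono_on zero_le_one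
    ((hcontI.const_mul α)) hcontD (by simpa using hptwise)
  rw [integral_const_mul, hFTC, Real.rpow_neg (by nlinarith) α] at hmono
  calc ∫ t in (0:ℝ)..1, ((1 - (t*r)^2) ^ α * (1 - t*r))⁻¹
      = (1/α) * (α * ∫ t in (0:ℝ)..1, ((1 - (t*r)^2) ^ α * (1 - t*r))⁻¹) := by
        rw [← mul_assoc, one_div_mul_cancel hα.ne', one_mul]
    _ ≤ (1/α) * ((1 - r^2) ^ α)⁻¹ := by
        apply mul_le_mul_of_nonneg_left hmono (by positivity)

lemma cesaro_pointwise (α : ℝ) (hα : 0 < α) (hα2 : α ≤ 1/2) (f : ℂ → ℂ)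
    (hdiff : DifferentiableOn ℂ f (Metric.ball 0 1)) (M : ℝ)
    (hf : ∀ w : ℂ, ‖w‖ < 1 → (1 - ‖w‖ ^ 2) ^ α * ‖f w‖ ≤ M)
    (z : ℂ) (hz : ‖z‖ < 1) :
    (1 - ‖z‖ ^ 2) ^ α * ‖cesaro f z‖ ≤ (1/α) * M := by
  set r := ‖z‖ with hr
  have hr0 : 0 ≤ r := norm_nonneg z
  have hM0 : 0 ≤ M := by
    have h0 := hf 0 (by simp)
    simp [Real.one_rpow] at h0
    exact (norm_nonneg _).trans h0
  -- facts on [0,1]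
  have hmem : ∀ t ∈ Icc (0:ℝ) 1, ‖(t:ℂ)*z‖ = t*r ∧ (t:ℂ)*z ∈ Metric.ball (0:ℂ) 1 ∧
      0 < 1 - t*r ∧ 0 < 1 - (t*r)^2 ∧ 1 - t*r ≤ ‖1 - (t:ℂ)*z‖ := by
    intro t ht
    obtain ⟨ht0, ht1⟩ := ht
    have hn : ‖(t:ℂ)*z‖ = t*r := by
      rw [norm_mul, Complex.norm_real, Real.norm_eq_abs, abs_of_nonneg ht0]
    have hx1 : t*r < 1 := lt_of_le_of_lt (by nlinarith) hz
    have hx0 : 0 ≤ t*r := mul_nonneg ht0 hr0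
    refine ⟨hn, ?_, by linarith, by nlinarith, ?_⟩
    · rw [Metric.mem_ball, dist_zero_right, hn]; exact hx1
    · calc 1 - t*r = ‖(1:ℂ)‖ - ‖(t:ℂ)*z‖ := by rw [hn]; simp
        _ ≤ ‖1 - (t:ℂ)*z‖ := norm_sub_norm_le _ _
  -- continuity of the integrand
  have hcont : ContinuousOn (fun t : ℝ => f ((t:ℂ)*z) / (1 - (t:ℂ)*z)) (Icc 0 1) := by
    have hmap : ∀ t ∈ Icc (0:ℝ) 1, (t:ℂ)*z ∈ Metric.ball (0:ℂ) 1 := fun t ht => (hmem t ht).2.1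
    have hc1 : ContinuousOn (fun t : ℝ => f ((t:ℂ)*z)) (Icc 0 1) :=
      (hdiff.continuousOn).comp (by fun_prop) hmap
    apply hc1.div (by fun_prop)
    intro t ht
    have := (hmem t ht).2.2.2.2
    have h1 := (hmem t ht).2.2.1
    intro h0
    rw [h0] at this
    simp at this
    linarith
  have hint1 : IntervalIntegrable (fun t : ℝ => ‖f ((t:ℂ)*z) / (1 - (t:ℂ)*z)‖)
      MeasureTheory.volume 0 1 := by
    apply ContinuousOn.intervalIntegrable
    rw [uIcc_of_le zero_le_one]; exact hcont.norm
  have hint2 : IntervalIntegrable (fun t : ℝ => M * ((1 - (t*r)^2) ^ α * (1 - t*r))⁻¹)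
      MeasureTheory.volume 0 1 := by
    apply ContinuousOn.intervalIntegrable
    rw [uIcc_of_le zero_le_one]
    intro t ht
    obtain ⟨-, -, h1, h2, -⟩ := hmem t ht
    have hbase : ContinuousAt (fun t : ℝ => 1 - (t*r)^2) t := by fun_prop
    have c1 : ContinuousAt (fun t : ℝ => (1 - (t*r)^2) ^ α) t := hbase.rpow_const (Or.inl h2.ne')
    have hne : (1 - (t*r)^2) ^ α * (1 - t*r) ≠ 0 := (mul_pos (Real.rpow_pos_of_pos h2 α) h1).ne'
    exact (continuousAt_const.mul ((c1.mul (by fun_prop)).inv₀ hne)).continuousWithinAt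
  -- pointwise domination
  have hdom : ∀ t ∈ Icc (0:ℝ) 1,
      ‖f ((t:ℂ)*z) / (1 - (t:ℂ)*z)‖ ≤ M * ((1 - (t*r)^2) ^ α * (1 - t*r))⁻¹ := by
    intro t ht
    obtain ⟨hn, hball, h1, h2, hden⟩ := hmem t ht
    have hA : 0 < (1 - (t*r)^2) ^ α := Real.rpow_pos_of_pos h2 α
    have hfb : ‖f ((t:ℂ)*z)‖ ≤ M / (1 - (t*r)^2) ^ α := by
      have := hf ((t:ℂ)*z) (by rw [hn]; nlinarith)
      rw [hn] at this
      rw [le_div_iff₀ hA]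
      linarith [this, mul_comm ((1 - (t*r)^2) ^ α) ‖f ((t:ℂ)*z)‖]
    rw [norm_div]
    calc ‖f ((t:ℂ)*z)‖ / ‖1 - (t:ℂ)*z‖ ≤ (M / (1 - (t*r)^2) ^ α) / (1 - t*r) := by
          apply div_le_div₀ (by positivity) hfb h1 hden
      _ = M * ((1 - (t*r)^2) ^ α * (1 - t*r))⁻¹ := by
          rw [div_div, div_eq_mul_inv]
  -- assemble
  have h1 : ‖cesaro f z‖ ≤ ∫ t in (0:ℝ)..1, ‖f ((t:ℂ)*z) / (1 - (t:ℂ)*z)‖ :=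
    norm_integral_le_integral_norm zero_le_one
  have h2 : (∫ t in (0:ℝ)..1, ‖f ((t:ℂ)*z) / (1 - (t:ℂ)*z)‖)
      ≤ ∫ t in (0:ℝ)..1, M * ((1 - (t*r)^2) ^ α * (1 - t*r))⁻¹ :=
    integral_mono_on zero_le_one hint1 hint2 hdom
  have h3 : (∫ t in (0:ℝ)..1, M * ((1 - (t*r)^2) ^ α * (1 - t*r))⁻¹)
      = M * ∫ t in (0:ℝ)..1, ((1 - (t*r)^2) ^ α * (1 - t*r))⁻¹ := integral_const_mul _ _
  have h4 := key_ineq α hα hα2 r hr0 hz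
  have hr2 : 0 < 1 - r^2 := by nlinarith
  have hB : 0 < (1 - r^2) ^ α := Real.rpow_pos_of_pos hr2 α
  have h5 : ‖cesaro f z‖ ≤ M * ((1/α) * ((1 - r^2) ^ α)⁻¹) := by
    calc ‖cesaro f z‖ ≤ M * ∫ t in (0:ℝ)..1, ((1 - (t*r)^2) ^ α * (1 - t*r))⁻¹ := by
          rw [← h3]; exact h1.trans h2
      _ ≤ M * ((1/α) * ((1 - r^2) ^ α)⁻¹) := mul_le_mul_of_nonneg_left h4 hM0
  calc (1 - r^2) ^ α * ‖cesaro f z‖ ≤ (1 - r^2) ^ α * (M * ((1/α) * ((1 - r^2) ^ α)⁻¹)) :=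
        mul_le_mul_of_nonneg_left h5 hB.le
    _ = (1/α) * M := by field_simp


lemma F_diff (α : ℝ) : DifferentiableOn ℂ (fun w : ℂ => (1 - w) ^ (-(α:ℂ))) (Metric.ball 0 1) := by
  intro z hz
  have hz' : ‖z‖ < 1 := by simpa [Metric.mem_ball, dist_eq_norm] using hz
  apply DifferentiableAt.differentiableWithinAt
  apply DifferentiableAt.cpow (by fun_prop) (differentiableAt_const _)
  left
  simp only [Complex.sub_re, Complex.one_re]
  have := Complex.abs_re_le_norm z
  cases abs_lt.mp (this.trans_lt hz') with
  | intro h1 h2 => linarith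

lemma F_norm (α : ℝ) (z : ℂ) (hz : ‖z‖ < 1) :
    ‖(1 - z) ^ (-(α:ℂ))‖ = ‖1 - z‖ ^ (-α) := by
  have hne : (1 : ℂ) - z ≠ 0 := by
    intro h
    have : z = 1 := by linear_combination -h
    rw [this] at hz; simp at hz
  rw [Complex.norm_cpow_of_ne_zero hne]
  simp

lemma F_bound (α : ℝ) (hα : 0 < α) (z : ℂ) (hz : ‖z‖ < 1) :
    (1 - ‖z‖ ^ 2) ^ α * ‖(1 - z) ^ (-(α:ℂ))‖ ≤ 2 ^ α := by
  have hn0 : 0 ≤ ‖z‖ := norm_nonneg z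
  have hd : 1 - ‖z‖ ≤ ‖1 - z‖ := by
    calc 1 - ‖z‖ = ‖(1:ℂ)‖ - ‖z‖ := by simp
      _ ≤ ‖1 - z‖ := norm_sub_norm_le _ _
  have hd0 : 0 < ‖1 - z‖ := lt_of_lt_of_le (by linarith) hd
  rw [F_norm α z hz, Real.rpow_neg hd0.le]
  have h1 : 0 ≤ 1 - ‖z‖ ^ 2 := by nlinarith
  have key : (1 - ‖z‖ ^ 2) / ‖1 - z‖ ≤ 2 := by
    rw [div_le_iff₀ hd0]; nlinarith
  calc (1 - ‖z‖ ^ 2) ^ α * (‖1 - z‖ ^ α)⁻¹ = ((1 - ‖z‖ ^ 2) / ‖1 - z‖) ^ α := by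
        rw [Real.div_rpow h1 hd0.le, div_eq_mul_inv]
    _ ≤ 2 ^ α := Real.rpow_le_rpow (by positivity) key hα.le

lemma F_cesaro (α : ℝ) (hα : 0 < α) (r : ℝ) (hr0 : 0 < r) (hr1 : r < 1) :
    cesaro (fun w : ℂ => (1 - w) ^ (-(α:ℂ))) (r:ℂ)
      = (((((1-r) ^ (-α) - 1)/(α*r)) : ℝ) : ℂ) := by
  have hpos : ∀ t ∈ Icc (0:ℝ) 1, 0 < 1 - t*r := by
    intro t ht; nlinarith [ht.1, ht.2]
  unfold cesaro
  have heq : EqOn (fun t : ℝ => (1 - (t:ℂ)*(r:ℂ)) ^ (-(α:ℂ)) / (1 - (t:ℂ)*(r:ℂ)))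
      (fun t : ℝ => ((((1-t*r) ^ (-α-1)) : ℝ) : ℂ)) (uIcc 0 1) := by
    intro t ht
    rw [uIcc_of_le zero_le_one] at ht
    have hp := hpos t ht
    have hc : (1 : ℂ) - (t:ℂ)*(r:ℂ) = (((1 - t*r : ℝ)) : ℂ) := by push_cast; ring
    simp only [hc]
    rw [show (-(α:ℂ)) = ((-α : ℝ) : ℂ) by push_cast; ring, ← Complex.ofReal_cpow hp.le (-α)]
    rw [← Complex.ofReal_div]
    congr 1
    rw [show -α-1 = -α - 1 by ring, Real.rpow_sub hp, Real.rpow_one]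
  rw [intervalIntegral.integral_congr heq, intervalIntegral.integral_ofReal]
  congr 1
  -- FTC
  have hderiv : ∀ t ∈ uIcc (0:ℝ) 1,
      HasDerivAt (fun t : ℝ => (1-t*r) ^ (-α) / (α*r)) ((1-t*r) ^ (-α-1)) t := by
    intro t ht
    rw [uIcc_of_le zero_le_one] at ht
    have hp := hpos t ht
    have h1 : HasDerivAt (fun t : ℝ => 1 - t*r) (-r) t := by
      simpa using ((hasDerivAt_id t).mul_const r).const_sub 1
    have h2 := HasDerivAt.rpow_const (p := -α) h1 (Or.inl hp.ne')
    have h3 := h2.div_const (α*r)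
    exact h3.congr_deriv (by rw [div_eq_iff (by positivity)]; ring)
  have hint : IntervalIntegrable (fun t : ℝ => (1-t*r) ^ (-α-1)) MeasureTheory.volume 0 1 := by
    apply ContinuousOn.intervalIntegrable
    rw [uIcc_of_le zero_le_one]
    intro t ht
    exact ((by fun_prop : ContinuousAt (fun t : ℝ => 1 - t*r) t).rpow_const
      (Or.inl (hpos t ht).ne')).continuousWithinAt
  rw [integral_eq_sub_of_hasDerivAt hderiv hint]
  rw [show (1:ℝ) - 1*r = 1 - r by ring, show (1:ℝ) - 0*r = 1 by ring, Real.one_rpow]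
  ring

theorem cesaro_stmt_9 (α : ℝ) (hα : 0 < α) (hα2 : α ≤ 1 / 2) :
    (∀ f : ℂ → ℂ, DifferentiableOn ℂ f (Metric.ball 0 1) →
      BddAbove {y : ℝ | ∃ z : ℂ, ‖z‖ < 1 ∧ y = (1 - ‖z‖ ^ 2) ^ α * ‖f z‖} →
      BddAbove {y : ℝ | ∃ z : ℂ, ‖z‖ < 1 ∧ y = (1 - ‖z‖ ^ 2) ^ α * ‖cesaro f z‖} ∧
      korenblumNorm α (cesaro f) ≤ (1 / α) * korenblumNorm α f) ∧
    (∀ c : ℝ, (∀ f : ℂ → ℂ, DifferentiableOn ℂ f (Metric.ball 0 1) →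
        BddAbove {y : ℝ | ∃ z : ℂ, ‖z‖ < 1 ∧ y = (1 - ‖z‖ ^ 2) ^ α * ‖f z‖} →
        korenblumNorm α (cesaro f) ≤ c * korenblumNorm α f) → 1 / α ≤ c) := by
  have hα2' : α ≤ 1/2 := by linarith
  have part1 : ∀ f : ℂ → ℂ, DifferentiableOn ℂ f (Metric.ball 0 1) →
      BddAbove {y : ℝ | ∃ z : ℂ, ‖z‖ < 1 ∧ y = (1 - ‖z‖ ^ 2) ^ α * ‖f z‖} →
      BddAbove {y : ℝ | ∃ z : ℂ, ‖z‖ < 1 ∧ y = (1 - ‖z‖ ^ 2) ^ α * ‖cesaro f z‖} ∧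
      korenblumNorm α (cesaro f) ≤ (1 / α) * korenblumNorm α f := by
    intro f hdiff hbdd
    have hf : ∀ w : ℂ, ‖w‖ < 1 → (1 - ‖w‖ ^ 2) ^ α * ‖f w‖ ≤ korenblumNorm α f := by
      intro w hw
      exact le_csSup hbdd ⟨w, hw, rfl⟩
    have hb : ∀ y ∈ {y : ℝ | ∃ z : ℂ, ‖z‖ < 1 ∧ y = (1 - ‖z‖ ^ 2) ^ α * ‖cesaro f z‖},
        y ≤ (1/α) * korenblumNorm α f := by
      rintro y ⟨z, hz, rfl⟩
      exact cesaro_pointwise α hα hα2' f hdiff _ hf z hz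
    refine ⟨⟨_, fun y hy => hb y hy⟩, ?_⟩
    exact csSup_le ⟨_, 0, by simp, rfl⟩ hb
  refine ⟨part1, ?_⟩
  intro c hc
  set F : ℂ → ℂ := fun w : ℂ => (1 - w) ^ (-(α:ℂ)) with hF
  have hdiffF := F_diff α
  have hbFb : ∀ y ∈ {y : ℝ | ∃ z : ℂ, ‖z‖ < 1 ∧ y = (1 - ‖z‖ ^ 2) ^ α * ‖F z‖},
      y ≤ 2 ^ α := by
    rintro y ⟨z, hz, rfl⟩
    exact F_bound α hα z hz
  have hbddF : BddAbove {y : ℝ | ∃ z : ℂ, ‖z‖ < 1 ∧ y = (1 - ‖z‖ ^ 2) ^ α * ‖F z‖} :=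
    ⟨_, fun y hy => hbFb y hy⟩
  have hKle : korenblumNorm α F ≤ 2 ^ α := csSup_le ⟨_, 0, by simp, rfl⟩ hbFb
  have hK1 : (1:ℝ) ≤ korenblumNorm α F := by
    have hmem : (1:ℝ) ∈ {y : ℝ | ∃ z : ℂ, ‖z‖ < 1 ∧ y = (1 - ‖z‖ ^ 2) ^ α * ‖F z‖} := by
      refine ⟨0, by simp, ?_⟩
      simp [hF, Complex.one_cpow]
    exact le_csSup hbddF hmem
  have hcF := hc F hdiffF hbddF
  have hbddCF := (part1 F hdiffF hbddF).1
  -- value of the quotient at real points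
  set g : ℝ → ℝ := fun r => ((1+r) ^ α - (1-r^2) ^ α)/(α*r) with hg
  have hval : ∀ r : ℝ, r ∈ Ioo (0:ℝ) 1 →
      g r = (1 - ‖(r:ℂ)‖ ^ 2) ^ α * ‖cesaro F (r:ℂ)‖ := by
    intro r hr
    obtain ⟨hr0, hr1⟩ := hr
    have hnr : ‖(r:ℂ)‖ = r := by
      rw [Complex.norm_real, Real.norm_eq_abs, abs_of_pos hr0]
    have h1r : 0 < 1 - r := by linarith
    have hge1 : (1:ℝ) ≤ (1-r) ^ (-α) := by
      rw [Real.rpow_neg h1r.le]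
      have h1 : (1-r) ^ α ≤ 1 := Real.rpow_le_one h1r.le (by linarith) hα.le
      have h2 : 0 < (1-r) ^ α := Real.rpow_pos_of_pos h1r α
      exact (one_le_inv₀ h2).mpr h1
    rw [hnr, F_cesaro α hα r hr0 hr1, Complex.norm_real, Real.norm_eq_abs,
      abs_of_nonneg (div_nonneg (by linarith) (by positivity))]
    have hsplit : (1 - r^2) ^ α * ((1-r) ^ (-α) - 1) = (1+r) ^ α - (1-r^2) ^ α := by
      rw [Real.rpow_neg h1r.le]
      have hmul : (1 - r^2) ^ α = (1+r) ^ α * (1-r) ^ α := by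
        rw [show (1:ℝ) - r^2 = (1+r)*(1-r) by ring,
          Real.mul_rpow (by linarith) h1r.le]
      rw [hmul]
      field_simp [(Real.rpow_pos_of_pos h1r α).ne']
    simp only [hg]
    rw [← hsplit]
    ring
  have hvle : ∀ r : ℝ, r ∈ Ioo (0:ℝ) 1 → g r ≤ c * korenblumNorm α F := by
    intro r hr
    have hmem : g r ∈ {y : ℝ | ∃ z : ℂ, ‖z‖ < 1 ∧ y = (1 - ‖z‖ ^ 2) ^ α * ‖cesaro F z‖} := by
      refine ⟨(r:ℂ), ?_, hval r hr⟩
      rw [Complex.norm_real, Real.norm_eq_abs, abs_of_pos hr.1]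
      exact hr.2
    exact (le_csSup hbddCF hmem).trans hcF
  have h2α : (0:ℝ) < 2 ^ α := Real.rpow_pos_of_pos two_pos α
  have hghalf : 0 < g (1/2) := by
    have hlt : ((3:ℝ)/4) ^ α < ((3:ℝ)/2) ^ α :=
      Real.rpow_lt_rpow (by norm_num) (by norm_num) hα
    have : g (1/2) = ((3/2:ℝ) ^ α - (3/4:ℝ) ^ α)/(α*(1/2)) := by
      simp only [hg]; norm_num
    rw [this]
    apply div_pos (by linarith) (by positivity)
  have hcpos : 0 < c := by
    by_contra hc0
    push_neg at hc0
    have h1 := hvle (1/2) (by norm_num)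
    have h2 : c * korenblumNorm α F ≤ 0 :=
      mul_nonpos_of_nonpos_of_nonneg hc0 (by linarith)
    linarith
  have hfinal : ∀ r : ℝ, r ∈ Ioo (0:ℝ) 1 → g r ≤ c * 2 ^ α := by
    intro r hr
    exact (hvle r hr).trans (mul_le_mul_of_nonneg_left hKle hcpos.le)
  -- limit as r → 1⁻
  have hT : Tendsto g (nhdsWithin 1 (Iio 1)) (nhds ((2 ^ α - 0)/(α*1))) := by
    apply Tendsto.mono_left _ nhdsWithin_le_nhds
    apply Tendsto.div
    · apply Tendsto.sub
      · have c1 : ContinuousAt (fun r : ℝ => (1+r) ^ α) 1 :=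
          ContinuousAt.rpow_const (by fun_prop) (Or.inl (by norm_num))
        have := c1.tendsto
        norm_num at this
        exact this
      · have c2 : ContinuousAt (fun r : ℝ => (1-r^2) ^ α) 1 :=
          ContinuousAt.rpow_const (by fun_prop) (Or.inr hα.le)
        have := c2.tendsto
        simpa [Real.zero_rpow hα.ne'] using this
    · exact (continuous_const.mul continuous_id).tendsto 1
    · simp [hα.ne']
  have hev : ∀ᶠ r in nhdsWithin (1:ℝ) (Iio 1), g r ≤ c * 2 ^ α := by
    filter_upwards [Ioo_mem_nhdsLT_of_mem (show (1:ℝ) ∈ Ioc (0:ℝ) 1 by constructor <;> norm_num)] with r hr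
    exact hfinal r hr
  have hlim : (2 ^ α - 0)/(α*1) ≤ c * 2 ^ α := le_of_tendsto hT hev
  rw [sub_zero, mul_one] at hlim
  have h1 : (1/α) * 2 ^ α ≤ c * 2 ^ α := by
    rw [div_mul_eq_mul_div, one_mul]
    exact hlim
  exact le_of_mul_le_mul_right h1 h2α
end

section
/- For 0 < α < 1, the norm of the Cesàro operator from the logarithmically weighted Korenblum space H^∞_{α,log} to the Korenblum space H^∞_α is at least 1/(1/α + log 2). -/
open MeasureTheory intervalIntegral

/-- The logarithmically weighted Korenblum space `H^∞_{α,log}` norm. -/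
noncomputable def korenblumLogNorm (α : ℝ) (f : ℂ → ℂ) : ℝ :=
  sSup {y : ℝ | ∃ z : ℂ, ‖z‖ < 1 ∧
    y = (1 - ‖z‖ ^ 2) ^ α * Real.log (2 * Real.exp (1 / α) / (1 - ‖z‖ ^ 2)) * ‖f z‖}

lemma log_aux (α : ℝ) (hα : 0 < α) (u : ℝ) (hu : 0 < u) (hu1 : u ≤ 1) :
    u ^ α * Real.log (2 * Real.exp (1 / α) / u) ≤ 1 / α + Real.log 2 := by
  have hlog : Real.log (2 * Real.exp (1 / α) / u)
      = Real.log 2 + 1 / α - Real.log u := by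
    rw [Real.log_div (by positivity) hu.ne', Real.log_mul two_ne_zero (Real.exp_ne_zero _),
      Real.log_exp]
  rw [hlog]
  set v := u ^ α with hv
  have hv0 : 0 < v := Real.rpow_pos_of_pos hu α
  have hv1 : v ≤ 1 := Real.rpow_le_one hu.le hu1 hα.le
  have hlogv : Real.log v = α * Real.log u := Real.log_rpow hu α
  have hkey : -(v * Real.log v) ≤ 1 - v := by
    have h1 := Real.log_le_sub_one_of_pos (show (0:ℝ) < 1 / v by positivity)
    rw [Real.log_div one_ne_zero hv0.ne', Real.log_one] at h1
    have h2 := mul_le_mul_of_nonneg_left h1 hv0.le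
    have h3 : v * (1 / v) = 1 := by field_simp
    nlinarith
  have hL : 0 ≤ Real.log 2 := Real.log_nonneg one_le_two
  -- multiply everything by α > 0
  rw [← mul_le_mul_iff_right₀ hα]
  have e1 : α * (1 / α) = 1 := by field_simp
  have e2 : v * (α * Real.log u) = v * Real.log v := by rw [hlogv]
  nlinarith [mul_le_mul_of_nonneg_right hv1 (mul_nonneg hα.le hL)]

lemma ces_aux (α : ℝ) (hα : 0 < α) (hα1 : α < 1) (z : ℂ) (hz : ‖z‖ < 1) :
    (1 - ‖z‖ ^ 2) ^ α * ‖cesaro (fun _ => (1:ℂ)) z‖ ≤ 2 / α := by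
  set r := ‖z‖ with hr
  have hr0 : 0 ≤ r := norm_nonneg z
  -- the bounding function
  set g : ℝ → ℝ := fun t => (1 - t) ^ (α - 1) * (1 - r) ^ (-α) with hg
  have hgint : IntervalIntegrable g volume 0 1 := by
    have h1 : IntervalIntegrable (fun t : ℝ => t ^ (α - 1)) volume 0 1 :=
      intervalIntegral.intervalIntegrable_rpow' (by linarith)
    have h2 := (h1.comp_sub_left 1).mul_const ((1 - r) ^ (-α))
    simpa using h2.symm
  have hbound : ‖cesaro (fun _ => (1:ℂ)) z‖ ≤ |∫ t in (0:ℝ)..1, g t| := by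
    apply intervalIntegral.norm_integral_le_abs_of_norm_le _ hgint
    have hne : ∀ᵐ t : ℝ ∂(volume.restrict (Set.uIoc (0:ℝ) 1)), t ≠ 1 := by
      refine (MeasureTheory.ae_restrict_iff' measurableSet_uIoc).2 ?_
      have h1 : ∀ᵐ t : ℝ ∂volume, t ≠ (1:ℝ) := by
        rw [MeasureTheory.ae_iff]
        have : {t : ℝ | ¬ t ≠ 1} = {1} := by ext t; simp
        rw [this]
        exact measure_singleton 1
      exact h1.mono fun t ht _ => ht
    filter_upwards [hne, MeasureTheory.ae_restrict_mem measurableSet_uIoc] with t ht htm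
    rw [Set.uIoc_of_le (zero_le_one)] at htm
    obtain ⟨ht0, ht1⟩ := htm
    have ht1' : t < 1 := lt_of_le_of_ne ht1 ht
    have htr : t * r ≤ r := by
      calc t * r ≤ 1 * r := mul_le_mul_of_nonneg_right ht1 hr0
      _ = r := one_mul r
    have htr' : t * r < 1 := lt_of_le_of_lt htr hz
    have htrt : t * r ≤ t := by
      calc t * r ≤ t * 1 := mul_le_mul_of_nonneg_left hz.le ht0.le
      _ = t := mul_one t
    have hden : (0:ℝ) < 1 - t * r := by linarith
    have hnormtz : ‖(t:ℂ) * z‖ = t * r := by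
      rw [norm_mul, Complex.norm_real, Real.norm_eq_abs, abs_of_pos ht0]
    have h1 : 1 - t * r ≤ ‖1 - (t:ℂ) * z‖ := by
      have := norm_sub_norm_le (1 : ℂ) ((t:ℂ) * z)
      rw [norm_one, hnormtz] at this
      linarith
    have hnz : (0:ℝ) < ‖1 - (t:ℂ) * z‖ := lt_of_lt_of_le hden h1
    have hval : ‖(fun _ => (1:ℂ)) ((t:ℂ) * z) / (1 - (t:ℂ) * z)‖ = 1 / ‖1 - (t:ℂ) * z‖ := by
      simp [norm_div]
    rw [hval]
    -- key product inequality
    have hb1 : (1 - t) ^ (1 - α) ≤ (1 - t * r) ^ (1 - α) :=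
      Real.rpow_le_rpow (by linarith) (by linarith) (by linarith)
    have hb2 : (1 - r) ^ α ≤ (1 - t * r) ^ α :=
      Real.rpow_le_rpow (by linarith) (by linarith) hα.le
    have hprod : (1 - t) ^ (1 - α) * (1 - r) ^ α ≤ 1 - t * r := by
      calc (1 - t) ^ (1 - α) * (1 - r) ^ α
          ≤ (1 - t * r) ^ (1 - α) * (1 - t * r) ^ α := by
            apply mul_le_mul hb1 hb2 (Real.rpow_nonneg (by linarith) _)
              (Real.rpow_nonneg (by linarith) _)
        _ = (1 - t * r) ^ ((1 - α) + α) := (Real.rpow_add hden _ _).symm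
        _ = 1 - t * r := by norm_num
    have hppos : (0:ℝ) < (1 - t) ^ (1 - α) * (1 - r) ^ α :=
      mul_pos (Real.rpow_pos_of_pos (by linarith) _) (Real.rpow_pos_of_pos (by linarith) _)
    have hrhs : g t = ((1 - t) ^ (1 - α) * (1 - r) ^ α)⁻¹ := by
      rw [hg]
      simp only
      rw [show α - 1 = -(1 - α) by ring, Real.rpow_neg (by linarith), Real.rpow_neg (by linarith),
        mul_inv]
    rw [hrhs, one_div]
    calc ‖1 - (t:ℂ) * z‖⁻¹ ≤ (1 - t * r)⁻¹ := by
          apply inv_anti₀ hden h1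
      _ ≤ ((1 - t) ^ (1 - α) * (1 - r) ^ α)⁻¹ := inv_anti₀ hppos hprod
  -- compute the integral of g
  have hgval : ∫ t in (0:ℝ)..1, g t = (1 / α) * (1 - r) ^ (-α) := by
    rw [hg]
    rw [intervalIntegral.integral_mul_const]
    congr 1
    have h1 : ∀ t : ℝ, (1 - t) ^ (α - 1) = (fun s : ℝ => s ^ (α - 1)) (1 - t) := fun _ => rfl
    rw [show (fun t : ℝ => (1 - t) ^ (α - 1)) = fun t : ℝ => (fun s : ℝ => s ^ (α - 1)) (1 - t)
      from rfl]
    rw [intervalIntegral.integral_comp_sub_left (fun s : ℝ => s ^ (α - 1)) 1]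
    norm_num
    rw [integral_rpow (Or.inl (by linarith))]
    rw [show α - 1 + 1 = α by ring, Real.one_rpow, Real.zero_rpow hα.ne']
    norm_num
  have habs : |∫ t in (0:ℝ)..1, g t| = (1 / α) * (1 - r) ^ (-α) := by
    rw [hgval, abs_of_nonneg]
    exact mul_nonneg (by positivity) (Real.rpow_nonneg (by linarith) _)
  rw [habs] at hbound
  -- final computation
  have hfin : (1 - r ^ 2) ^ α * ((1 / α) * (1 - r) ^ (-α)) ≤ 2 / α := by
    have heq : (1 - r ^ 2) ^ α * (1 - r) ^ (-α) = (1 + r) ^ α := by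
      rw [show (1:ℝ) - r ^ 2 = (1 - r) * (1 + r) by ring,
        Real.mul_rpow (by linarith) (by linarith), mul_comm ((1-r)^α), mul_assoc,
        ← Real.rpow_add (by linarith : (0:ℝ) < 1 - r)]
      norm_num
    have h2 : (1 + r) ^ α ≤ 2 := by
      calc (1 + r) ^ α ≤ 2 ^ α := Real.rpow_le_rpow (by linarith) (by linarith) hα.le
        _ ≤ 2 ^ (1:ℝ) := Real.rpow_le_rpow_of_exponent_le one_le_two hα1.le
        _ = 2 := Real.rpow_one 2
    calc (1 - r ^ 2) ^ α * ((1 / α) * (1 - r) ^ (-α))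
        = ((1 - r ^ 2) ^ α * (1 - r) ^ (-α)) * (1 / α) := by ring
      _ = (1 + r) ^ α * (1 / α) := by rw [heq]
      _ ≤ 2 * (1 / α) := by
          apply mul_le_mul_of_nonneg_right h2 (by positivity)
      _ = 2 / α := by ring
  calc (1 - r ^ 2) ^ α * ‖cesaro (fun _ => (1:ℂ)) z‖
      ≤ (1 - r ^ 2) ^ α * ((1 / α) * (1 - r) ^ (-α)) := by
        apply mul_le_mul_of_nonneg_left hbound (Real.rpow_nonneg (by nlinarith) _)
    _ ≤ 2 / α := hfin

theorem cesaro_stmt_11 (α : ℝ) (hα : 0 < α) (hα1 : α < 1) :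
    ∀ c : ℝ, (∀ f : ℂ → ℂ, DifferentiableOn ℂ f (Metric.ball 0 1) →
      BddAbove {y : ℝ | ∃ z : ℂ, ‖z‖ < 1 ∧
        y = (1 - ‖z‖ ^ 2) ^ α * Real.log (2 * Real.exp (1 / α) / (1 - ‖z‖ ^ 2)) * ‖f z‖} →
      korenblumNorm α (cesaro f) ≤ c * korenblumLogNorm α f) →
    1 / (1 / α + Real.log 2) ≤ c := by
  intro c hc
  set C : ℝ := 1 / α + Real.log 2 with hC
  have hL : 0 ≤ Real.log 2 := Real.log_nonneg one_le_two
  have hCpos : 0 < C := by rw [hC]; positivity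
  -- the constant function 1
  set f : ℂ → ℂ := fun _ => (1:ℂ) with hf
  have hub : ∀ y ∈ {y : ℝ | ∃ z : ℂ, ‖z‖ < 1 ∧
      y = (1 - ‖z‖ ^ 2) ^ α * Real.log (2 * Real.exp (1 / α) / (1 - ‖z‖ ^ 2)) * ‖f z‖},
      y ≤ C := by
    rintro y ⟨z, hz, rfl⟩
    have hu0 : 0 < 1 - ‖z‖ ^ 2 := by nlinarith [norm_nonneg z]
    have hu1 : 1 - ‖z‖ ^ 2 ≤ 1 := by nlinarith [norm_nonneg z]
    have := log_aux α hα (1 - ‖z‖ ^ 2) hu0 hu1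
    simp only [hf, norm_one, mul_one]
    exact this
  have hbdd : BddAbove {y : ℝ | ∃ z : ℂ, ‖z‖ < 1 ∧
      y = (1 - ‖z‖ ^ 2) ^ α * Real.log (2 * Real.exp (1 / α) / (1 - ‖z‖ ^ 2)) * ‖f z‖} :=
    ⟨C, hub⟩
  have hdiff : DifferentiableOn ℂ f (Metric.ball 0 1) := differentiableOn_const _
  have hkey := hc f hdiff hbdd
  -- korenblumLogNorm α f ≤ C
  have hlogle : korenblumLogNorm α f ≤ C := Real.sSup_le hub hCpos.le
  -- korenblumLogNorm α f ≥ 0 : element at z = 0 is C ≥ 0, but we only need ≤; we need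
  -- 1 ≤ korenblumNorm α (cesaro f)
  have hces0 : cesaro f 0 = 1 := by
    rw [cesaro]
    simp [hf]
  have hmem : (1:ℝ) ∈ {y : ℝ | ∃ z : ℂ, ‖z‖ < 1 ∧ y = (1 - ‖z‖ ^ 2) ^ α * ‖cesaro f z‖} := by
    refine ⟨0, by simp, ?_⟩
    rw [hces0]
    simp
  have hbdd2 : BddAbove {y : ℝ | ∃ z : ℂ, ‖z‖ < 1 ∧ y = (1 - ‖z‖ ^ 2) ^ α * ‖cesaro f z‖} := by
    refine ⟨2 / α, ?_⟩
    rintro y ⟨z, hz, rfl⟩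
    exact ces_aux α hα hα1 z hz
  have hone : (1:ℝ) ≤ korenblumNorm α (cesaro f) := le_csSup hbdd2 hmem
  -- also korenblumLogNorm α f ≥ 0 since it contains C > 0... we need nonneg of RHS anyway
  have hlognn : 0 ≤ korenblumLogNorm α f := by
    have hmemC : C ∈ {y : ℝ | ∃ z : ℂ, ‖z‖ < 1 ∧
        y = (1 - ‖z‖ ^ 2) ^ α * Real.log (2 * Real.exp (1 / α) / (1 - ‖z‖ ^ 2)) * ‖f z‖} := by
      refine ⟨0, by simp, ?_⟩
      simp only [hf, norm_one, mul_one, norm_zero]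
      rw [show (1:ℝ) - 0 ^ 2 = 1 by norm_num, Real.one_rpow, one_mul, div_one,
        Real.log_mul two_ne_zero (Real.exp_ne_zero _), Real.log_exp, hC]
      ring
    exact le_trans hCpos.le (le_csSup hbdd hmemC)
  have hcpos : 0 < c := by
    by_contra h
    push_neg at h
    have : c * korenblumLogNorm α f ≤ 0 := mul_nonpos_of_nonpos_of_nonneg h hlognn
    linarith
  have h1 : (1:ℝ) ≤ c * C := by
    calc (1:ℝ) ≤ korenblumNorm α (cesaro f) := hone
      _ ≤ c * korenblumLogNorm α f := hkey
      _ ≤ c * C := mul_le_mul_of_nonneg_left hlogle hcpos.le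
  rw [div_le_iff₀ hCpos]
  linarith
end

section
/- For 0 < α < 1, the norm of the Cesàro operator 𝒞 acting on the logarithmically weighted Korenblum space H^∞_{α,log} is at least 1/α. -/
set_option maxHeartbeats 1000000

open Real Set

noncomputable def phiW (α s : ℝ) : ℝ := s ^ α * Real.log (2 * Real.exp (1/α) / s)

lemma logA (α : ℝ) (hα : 0 < α) : Real.log (2 * Real.exp (1/α)) = Real.log 2 + 1/α := by
  rw [Real.log_mul (by norm_num) (Real.exp_ne_zero _), Real.log_exp]

lemma one_lt_A (α : ℝ) (hα : 0 < α) : 2 < 2 * Real.exp (1/α) := by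
  nlinarith [Real.add_one_le_exp (1/α), (by positivity : (0:ℝ) < 1/α)]

lemma phi_pos (α : ℝ) (hα : 0 < α) {s : ℝ} (h0 : 0 < s) (h2 : s ≤ 2) : 0 < phiW α s := by
  have hA := one_lt_A α hα
  have : 1/α ≤ Real.log (2 * Real.exp (1/α) / s) := by
    rw [Real.log_div (by positivity) (ne_of_gt h0), logA α hα]
    have := Real.log_le_log h0 h2
    have h2' : Real.log s ≤ Real.log 2 := Real.log_le_log h0 h2
    linarith
  have h1α : 0 < 1/α := by positivity
  exact mul_pos (Real.rpow_pos_of_pos h0 α) (lt_of_lt_of_le h1α this)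

lemma phi_mono (α : ℝ) (hα : 0 < α) (hα1 : α < 1) : MonotoneOn (phiW α) (Set.Ioc 0 2) := by
  have key : ∀ s ∈ Set.Ioi (0:ℝ), HasDerivAt (phiW α)
      (α * s ^ (α - 1) * (Real.log 2 - Real.log s)) s := by
    intro s hs
    have hs0 : (0:ℝ) < s := hs
    have h1 : HasDerivAt (fun x : ℝ => x ^ α) (α * s ^ (α - 1)) s := by
      simpa [mul_comm] using Real.hasDerivAt_rpow_const (p := α) (Or.inl (ne_of_gt hs0))
    have h2 : HasDerivAt (fun x : ℝ => Real.log (2 * Real.exp (1/α) / x))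
        (-(1/s)) s := by
      have hl : HasDerivAt Real.log s⁻¹ s := Real.hasDerivAt_log (ne_of_gt hs0)
      have : HasDerivAt (fun x : ℝ => Real.log (2 * Real.exp (1/α)) - Real.log x)
          (-(1/s)) s := by
        refine ((hasDerivAt_const s (Real.log (2 * Real.exp (1/α)))).sub hl).congr_deriv ?_
        simp [one_div]
      refine this.congr_of_eventuallyEq ?_
      filter_upwards [eventually_gt_nhds hs0] with x hx
      rw [Real.log_div (by positivity) (ne_of_gt hx)]
    have := h1.mul h2
    refine this.congr_deriv ?_
    symm
    have hsne : s ≠ 0 := ne_of_gt hs0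
    rw [Real.log_div (by positivity) hsne, logA α hα]
    have : s ^ α * -(1/s) = -(s ^ (α-1)) := by
      rw [Real.rpow_sub hs0, Real.rpow_one]
      field_simp
    rw [this]
    have hαne : α ≠ 0 := ne_of_gt hα
    field_simp
    ring
  apply monotoneOn_of_deriv_nonneg (convex_Ioc 0 2)
  · intro s hs
    exact (key s hs.1).continuousAt.continuousWithinAt
  · intro s hs
    rw [interior_Ioc] at hs
    exact (key s hs.1).differentiableAt.differentiableWithinAt
  · intro s hs
    rw [interior_Ioc] at hs
    rw [(key s hs.1).deriv]
    have h2 : Real.log s ≤ Real.log 2 := Real.log_le_log hs.1 hs.2.le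
    have := Real.rpow_pos_of_pos hs.1 (α - 1)
    exact mul_nonneg (mul_nonneg hα.le (Real.rpow_pos_of_pos hs.1 (α - 1)).le) (by linarith)

noncomputable def falpha (α : ℝ) (z : ℂ) : ℂ :=
  1 / ((1 - z^2) ^ (α : ℂ) * Complex.log (((2 * Real.exp (1/α) : ℝ) : ℂ) / (1 - z^2)))

section facts
variable {α : ℝ} {z : ℂ}

lemma re_pos (hz : ‖z‖ < 1) : 0 < (1 - z^2).re := by
  have h1 : (1 - z^2).re = 1 - (z.re * z.re - z.im * z.im) := by
    simp [Complex.sub_re, Complex.one_re, pow_two, Complex.mul_re]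
  have h2 : Complex.normSq z < 1 := by
    rw [← Complex.sq_norm]
    nlinarith [norm_nonneg z]
  rw [Complex.normSq_apply] at h2
  nlinarith

lemma sub_sq_ne (hz : ‖z‖ < 1) : (1 - z^2) ≠ 0 := by
  intro h
  have h2 := re_pos hz
  rw [h] at h2
  simp at h2

lemma nlb (hz : ‖z‖ < 1) : 1 - ‖z‖^2 ≤ ‖1 - z^2‖ := by
  calc 1 - ‖z‖^2 = ‖(1:ℂ)‖ - ‖z^2‖ := by simp [norm_pow]
  _ ≤ ‖1 - z^2‖ := norm_sub_norm_le _ _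

lemma nub (hz : ‖z‖ < 1) : ‖1 - z^2‖ ≤ 2 := by
  calc ‖1 - z^2‖ ≤ ‖(1:ℂ)‖ + ‖z^2‖ := norm_sub_le _ _
  _ ≤ 2 := by
    simp only [norm_one, norm_pow]
    nlinarith [norm_nonneg z]

lemma abs_log_lb (hα : 0 < α) (hz : ‖z‖ < 1) :
    Real.log (2 * Real.exp (1/α) / ‖1 - z^2‖) ≤
      ‖Complex.log (((2 * Real.exp (1/α) : ℝ) : ℂ) / (1 - z^2))‖ := by
  have h1 : ‖((2 * Real.exp (1/α) : ℝ) : ℂ) / (1 - z^2)‖ = 2 * Real.exp (1/α) / ‖1 - z^2‖ := by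
    rw [norm_div, Complex.norm_real, Real.norm_of_nonneg (by positivity)]
  calc Real.log (2 * Real.exp (1/α) / ‖1 - z^2‖)
      = (Complex.log (((2 * Real.exp (1/α) : ℝ) : ℂ) / (1 - z^2))).re := by
        rw [Complex.log_re, ← h1]
  _ ≤ |(Complex.log (((2 * Real.exp (1/α) : ℝ) : ℂ) / (1 - z^2))).re| := le_abs_self _
  _ ≤ _ := Complex.abs_re_le_norm _

lemma log_pos_aux (hα : 0 < α) (hz : ‖z‖ < 1) :
    1/α ≤ Real.log (2 * Real.exp (1/α) / ‖1 - z^2‖) := by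
  have h0 : 0 < ‖1 - z^2‖ := norm_pos_iff.mpr (sub_sq_ne hz)
  rw [Real.log_div (by positivity) (ne_of_gt h0), logA α hα]
  have := Real.log_le_log h0 (nub hz)
  linarith

lemma norm_cpow (hz : ‖z‖ < 1) : ‖(1 - z^2) ^ (α : ℂ)‖ = ‖1 - z^2‖ ^ α := by
  rw [Complex.norm_cpow_of_ne_zero (sub_sq_ne hz)]
  simp

lemma norm_falpha_le (hα : 0 < α) (hz : ‖z‖ < 1) :
    ‖falpha α z‖ ≤ 1 / phiW α ‖1 - z^2‖ := by
  have h0 : 0 < ‖1 - z^2‖ := norm_pos_iff.mpr (sub_sq_ne hz)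
  have hlog := log_pos_aux hα hz
  have hloglb := abs_log_lb hα hz
  have hαpos : (0:ℝ) < 1/α := by positivity
  rw [falpha, norm_div, norm_one, norm_mul, norm_cpow hz, phiW]
  apply one_div_le_one_div_of_le
  · exact mul_pos (Real.rpow_pos_of_pos h0 α) (lt_of_lt_of_le hαpos hlog)
  · exact mul_le_mul_of_nonneg_left (le_trans hloglb (le_refl _))
      (Real.rpow_nonneg h0.le α)

lemma weighted_norm_falpha_le (hα : 0 < α) (hα1 : α < 1) (hz : ‖z‖ < 1) :
    phiW α (1 - ‖z‖^2) * ‖falpha α z‖ ≤ 1 := by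
  have h0 : 0 < ‖1 - z^2‖ := norm_pos_iff.mpr (sub_sq_ne hz)
  have hs0 : 0 < 1 - ‖z‖^2 := by nlinarith [norm_nonneg z]
  have hmem1 : (1 - ‖z‖^2) ∈ Set.Ioc (0:ℝ) 2 := ⟨hs0, by nlinarith [norm_nonneg z]⟩
  have hmem2 : ‖1 - z^2‖ ∈ Set.Ioc (0:ℝ) 2 := ⟨h0, nub hz⟩
  have hmono := phi_mono α hα hα1 hmem1 hmem2 (nlb hz)
  have h2 := norm_falpha_le hα hz
  have hphi2 : 0 < phiW α ‖1 - z^2‖ := phi_pos α hα h0 (nub hz)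
  have hphi1 : 0 < phiW α (1 - ‖z‖^2) := phi_pos α hα hs0 hmem1.2
  have key : phiW α (1 - ‖z‖^2) * ‖falpha α z‖ ≤ phiW α ‖1 - z^2‖ * (1 / phiW α ‖1 - z^2‖) :=
    mul_le_mul hmono h2 (norm_nonneg _) hphi2.le
  rwa [mul_one_div, div_self (ne_of_gt hphi2)] at key

end facts

section facts2
variable {α : ℝ} {z : ℂ}

lemma denom_ne (hα : 0 < α) (hz : ‖z‖ < 1) :
    (1 - z^2) ^ (α : ℂ) * Complex.log (((2 * Real.exp (1/α) : ℝ) : ℂ) / (1 - z^2)) ≠ 0 := by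
  have h0 : 0 < ‖1 - z^2‖ := norm_pos_iff.mpr (sub_sq_ne hz)
  apply mul_ne_zero
  · intro h
    have := norm_cpow (α := α) hz
    rw [h, norm_zero] at this
    exact (ne_of_gt (Real.rpow_pos_of_pos h0 α)) this.symm
  · intro h
    have h1 := le_trans (log_pos_aux hα hz) (abs_log_lb hα hz)
    rw [h, norm_zero] at h1
    have : (0:ℝ) < 1/α := by positivity
    linarith

lemma slit1 (hz : ‖z‖ < 1) : (1 - z^2) ∈ Complex.slitPlane :=
  Complex.mem_slitPlane_iff.mpr (Or.inl (re_pos hz))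

lemma slit2 (hα : 0 < α) (hz : ‖z‖ < 1) :
    ((2 * Real.exp (1/α) : ℝ) : ℂ) / (1 - z^2) ∈ Complex.slitPlane := by
  apply Complex.mem_slitPlane_iff.mpr
  left
  have hne := sub_sq_ne hz
  have hns : 0 < Complex.normSq (1 - z^2) := Complex.normSq_pos.mpr hne
  have : (((2 * Real.exp (1/α) : ℝ) : ℂ) / (1 - z^2)).re
      = (2 * Real.exp (1/α)) * ((1 - z^2).re / Complex.normSq (1 - z^2)) := by
    rw [div_eq_mul_inv, Complex.re_ofReal_mul, Complex.inv_re]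
  rw [this]
  have := re_pos hz
  positivity

lemma falpha_diffAt (hα : 0 < α) (hz : ‖z‖ < 1) : DifferentiableAt ℂ (falpha α) z := by
  have hsub : DifferentiableAt ℂ (fun z : ℂ => 1 - z^2) z := by fun_prop
  have h1 : DifferentiableAt ℂ (fun z : ℂ => (1 - z^2) ^ (α : ℂ)) z :=
    DifferentiableAt.cpow hsub (differentiableAt_const _) (slit1 hz)
  have h2 : DifferentiableAt ℂ
      (fun z : ℂ => Complex.log (((2 * Real.exp (1/α) : ℝ) : ℂ) / (1 - z^2))) z := by
    apply DifferentiableAt.clog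
    · exact (differentiableAt_const _).div hsub (sub_sq_ne hz)
    · exact slit2 hα hz
  exact (differentiableAt_const 1).div (h1.mul h2) (denom_ne hα hz)

lemma falpha_ofReal (hα : 0 < α) {s : ℝ} (h0 : 0 ≤ s) (h1 : s < 1) :
    falpha α (s : ℂ) =
      ((1 / ((1 - s^2)^α * Real.log (2 * Real.exp (1/α) / (1 - s^2))) : ℝ) : ℂ) := by
  have hs2 : (0:ℝ) ≤ 1 - s^2 := by nlinarith
  have e1 : 1 - (s:ℂ)^2 = ((1 - s^2 : ℝ) : ℂ) := by push_cast; ring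
  rw [falpha, e1, ← Complex.ofReal_cpow hs2 α]
  have e2 : ((2 * Real.exp (1/α) : ℝ) : ℂ) / ((1 - s^2 : ℝ) : ℂ)
      = ((2 * Real.exp (1/α) / (1 - s^2) : ℝ) : ℂ) := by push_cast; ring
  rw [e2, ← Complex.ofReal_log (by positivity)]
  push_cast
  ring

end facts2

section integrals

lemma hasDerivAt_one_sub_rpow (p a t : ℝ) (h : 0 < 1 - t*a) :
    HasDerivAt (fun t : ℝ => (1 - t*a)^p) (p * (1 - t*a)^(p-1) * (-a)) t := by
  have hg : HasDerivAt (fun t : ℝ => 1 - t*a) (-a) t := by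
    simpa using (((hasDerivAt_id t).mul_const a).const_sub 1)
  have ho := Real.hasDerivAt_rpow_const (x := 1 - t*a) (p := p) (Or.inl (ne_of_gt h))
  exact ho.comp t hg

lemma contOn_one_sub_rpow {a : ℝ} (p : ℝ) (h0 : 0 ≤ a) (h1 : a < 1) :
    ContinuousOn (fun t : ℝ => (1 - t*a)^p) (Set.uIcc 0 1) := by
  rw [Set.uIcc_of_le (by norm_num : (0:ℝ) ≤ 1)]
  apply ContinuousOn.rpow_const
  · fun_prop
  · intro t ht
    left
    have : 1 - t*a > 0 := by nlinarith [ht.1, ht.2]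
    exact ne_of_gt this

lemma integral_aux {a q : ℝ} (h0 : 0 < a) (h1 : a < 1) (hq : q ≠ 0) :
    ∫ t in (0:ℝ)..1, (1 - t*a)^(q-1) = (1 - (1-a)^q)/(q*a) := by
  have key : ∀ t ∈ Set.uIcc (0:ℝ) 1,
      HasDerivAt (fun t : ℝ => -((1 - t*a)^q/(q*a))) ((1 - t*a)^(q-1)) t := by
    intro t ht
    rw [Set.uIcc_of_le (by norm_num : (0:ℝ) ≤ 1)] at ht
    have hpos : 0 < 1 - t*a := by nlinarith [ht.1, ht.2]
    have := ((hasDerivAt_one_sub_rpow q a t hpos).div_const (q*a)).neg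
    refine this.congr_deriv ?_
    symm
    rw [mul_neg, neg_div, neg_neg, eq_div_iff (mul_ne_zero hq (ne_of_gt h0))]
    ring
  have hint : IntervalIntegrable (fun t : ℝ => (1 - t*a)^(q-1)) MeasureTheory.volume 0 1 :=
    (contOn_one_sub_rpow (q-1) h0.le h1).intervalIntegrable
  rw [intervalIntegral.integral_eq_sub_of_hasDerivAt key hint]
  simp only [one_mul, zero_mul, sub_zero, Real.one_rpow]
  field_simp
  ring

lemma integral_ub {a γ : ℝ} (h0 : 0 ≤ a) (h1 : a < 1) (hγ0 : 0 < γ) (hγ1 : γ < 1) :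
    ∫ t in (0:ℝ)..1, (1 - t*a)^(γ-1) ≤ 1/γ := by
  rcases eq_or_lt_of_le h0 with h | h
  · simp only [← h, mul_zero, sub_zero, Real.one_rpow]
    rw [intervalIntegral.integral_const]
    simp
    nlinarith [inv_pos.mpr hγ0, mul_inv_cancel₀ (ne_of_gt hγ0)]
  · rw [integral_aux h h1 (ne_of_gt hγ0)]
    have h1a : 0 < 1 - a := by linarith
    have hge : 1 - a ≤ (1-a)^γ := by
      calc 1 - a = (1-a)^(1:ℝ) := (Real.rpow_one _).symm
      _ ≤ (1-a)^γ := Real.rpow_le_rpow_of_exponent_ge h1a (by linarith) hγ1.le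
    rw [div_le_div_iff₀ (by positivity) hγ0]
    nlinarith

lemma integral_lb {ρ α : ℝ} (h0 : 0 < ρ) (h1 : ρ < 1) (hα : 0 < α) :
    ∫ t in (0:ℝ)..1, (1 - t*ρ)^(-1-α) = ((1-ρ)^(-α) - 1)/(α*ρ) := by
  have := integral_aux (q := -α) h0 h1 (by linarith)
  have e : (-α - 1 : ℝ) = -1 - α := by ring
  rw [show (-1-α : ℝ) = -α - 1 by ring]
  rw [this]
  field_simp
  ring

end integrals

section cesbound
variable {α r : ℝ} {z : ℂ}

lemma norm_falpha_le_of_le (hα : 0 < α) (hα1 : α < 1) (hr0 : 0 ≤ r) (hr1 : r < 1)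
    {w : ℂ} (hw : ‖w‖ ≤ r) : ‖falpha α w‖ ≤ 1 / phiW α (1 - r^2) := by
  have hw1 : ‖w‖ < 1 := lt_of_le_of_lt hw hr1
  have h0 : 0 < ‖1 - w^2‖ := norm_pos_iff.mpr (sub_sq_ne hw1)
  have hr2 : 0 < 1 - r^2 := by nlinarith
  have hm : 1 - r^2 ≤ ‖1 - w^2‖ := by
    refine le_trans ?_ (nlb hw1)
    nlinarith [norm_nonneg w]
  have hmono := phi_mono α hα hα1 (Set.mem_Ioc.mpr ⟨hr2, by nlinarith⟩)
    (Set.mem_Ioc.mpr ⟨h0, nub hw1⟩) hm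
  exact le_trans (norm_falpha_le hα hw1)
    (one_div_le_one_div_of_le (phi_pos α hα hr2 (by nlinarith)) hmono)

lemma norm_one_sub_tz (hz : ‖z‖ < 1) {t : ℝ} (ht : t ∈ Set.Icc (0:ℝ) 1) :
    1 - t * ‖z‖ ≤ ‖1 - (t:ℂ) * z‖ := by
  have : ‖(t:ℂ) * z‖ = t * ‖z‖ := by
    rw [norm_mul, Complex.norm_real, Real.norm_of_nonneg ht.1]
  calc 1 - t * ‖z‖ = ‖(1:ℂ)‖ - ‖(t:ℂ) * z‖ := by rw [this, norm_one]
  _ ≤ _ := norm_sub_norm_le _ _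

lemma one_sub_tnorm_pos (hz : ‖z‖ < 1) {t : ℝ} (ht : t ∈ Set.Icc (0:ℝ) 1) :
    0 < 1 - t * ‖z‖ := by
  nlinarith [ht.1, ht.2, norm_nonneg z]

lemma g_cont (hα : 0 < α) (hr0 : 0 ≤ r) (hr1 : r < 1) (hz : ‖z‖ < 1) :
    ContinuousOn (fun t : ℝ => falpha α ((r:ℂ) * ((t:ℂ) * z)) / (1 - (t:ℂ) * z))
      (Set.uIcc 0 1) := by
  rw [Set.uIcc_of_le (by norm_num : (0:ℝ) ≤ 1)]
  apply ContinuousOn.div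
  · intro t ht
    have hmem : ‖(r:ℂ) * ((t:ℂ) * z)‖ < 1 := by
      rw [norm_mul, norm_mul, Complex.norm_real, Complex.norm_real,
        Real.norm_of_nonneg hr0, Real.norm_of_nonneg ht.1]
      nlinarith [norm_nonneg z,
        mul_nonneg (sub_nonneg.mpr hr1.le) (mul_nonneg ht.1 (norm_nonneg z)),
        mul_nonneg (sub_nonneg.mpr ht.2) (norm_nonneg z)]
    have hin : ContinuousAt (fun t : ℝ => (r:ℂ) * ((t:ℂ) * z)) t := by fun_prop
    have hc : ContinuousAt ((falpha α) ∘ (fun t : ℝ => (r:ℂ) * ((t:ℂ) * z))) t :=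
      ContinuousAt.comp (falpha_diffAt hα hmem).continuousAt hin
    exact hc.continuousWithinAt
  · fun_prop
  · intro t ht
    intro h
    have h1 := norm_one_sub_tz hz ht
    have h2 := one_sub_tnorm_pos hz ht
    rw [h, norm_zero] at h1
    linarith

lemma cesaro_g_norm_le (hα : 0 < α) (hα1 : α < 1) (hr0 : 0 ≤ r) (hr1 : r < 1)
    (hz : ‖z‖ < 1) :
    ‖cesaro (fun w => falpha α ((r:ℂ) * w)) z‖ ≤
      (1 / phiW α (1 - r^2)) * ((1 - ‖z‖)^(-(α/2)) * (2/α)) := by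
  set a := ‖z‖ with ha
  have ha0 : 0 ≤ a := norm_nonneg z
  have ha1 : a < 1 := hz
  set M := 1 / phiW α (1 - r^2) with hM
  have hM0 : 0 ≤ M := by
    have : 0 < phiW α (1 - r^2) := phi_pos α hα (by nlinarith) (by nlinarith)
    positivity
  have hγ0 : (0:ℝ) < α/2 := by linarith
  have hγ1 : α/2 < 1 := by linarith
  have bound : ∀ t ∈ Set.Icc (0:ℝ) 1,
      ‖falpha α ((r:ℂ) * ((t:ℂ) * z)) / (1 - (t:ℂ) * z)‖ ≤
        M * ((1-a)^(-(α/2)) * (1 - t*a)^(α/2 - 1)) := by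
    intro t ht
    have h2 := one_sub_tnorm_pos hz ht
    have h1 := norm_one_sub_tz hz ht
    have hne : (0:ℝ) < ‖1 - (t:ℂ) * z‖ := lt_of_lt_of_le h2 h1
    rw [norm_div]
    have hnum : ‖falpha α ((r:ℂ) * ((t:ℂ) * z))‖ ≤ M := by
      apply norm_falpha_le_of_le hα hα1 hr0 hr1
      rw [norm_mul, norm_mul, Complex.norm_real, Complex.norm_real,
        Real.norm_of_nonneg hr0, Real.norm_of_nonneg ht.1]
      nlinarith [norm_nonneg z,
        mul_nonneg (sub_nonneg.mpr hr1.le) (mul_nonneg ht.1 (norm_nonneg z)),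
        mul_nonneg (sub_nonneg.mpr ht.2) (norm_nonneg z)]
    have key : (1:ℝ)/(1 - t*a) ≤ (1-a)^(-(α/2)) * (1 - t*a)^(α/2 - 1) := by
      have h1a : 0 < 1 - a := by linarith
      have hta : 1 - a ≤ 1 - t*a := by nlinarith [ht.1, ht.2]
      have e1 : (1 - t*a)^(α/2 - 1) = (1-t*a)^(α/2) * (1-t*a)⁻¹ := by
        rw [Real.rpow_sub h2, Real.rpow_one, div_eq_mul_inv]
      rw [e1, ← mul_assoc, one_div]
      have hfac : 1 ≤ (1-a)^(-(α/2)) * (1-t*a)^(α/2) := by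
        have hle : (1-a)^(α/2) ≤ (1-t*a)^(α/2) := Real.rpow_le_rpow h1a.le hta hγ0.le
        have hpos : 0 < (1-a)^(α/2) := Real.rpow_pos_of_pos h1a _
        rw [Real.rpow_neg h1a.le, inv_mul_eq_div, le_div_iff₀ hpos, one_mul]
        exact hle
      calc (1-t*a)⁻¹ = 1 * (1-t*a)⁻¹ := (one_mul _).symm
      _ ≤ (1-a)^(-(α/2)) * (1-t*a)^(α/2) * (1-t*a)⁻¹ :=
          mul_le_mul_of_nonneg_right hfac (inv_nonneg.mpr h2.le)
    calc ‖falpha α ((r:ℂ) * ((t:ℂ) * z))‖ / ‖1 - (t:ℂ) * z‖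
        ≤ M / (1 - t*a) := by gcongr
    _ = M * (1/(1 - t*a)) := by rw [mul_one_div]
    _ ≤ M * ((1-a)^(-(α/2)) * (1 - t*a)^(α/2 - 1)) := by
        apply mul_le_mul_of_nonneg_left key hM0
  have hcont := g_cont hα hr0 hr1 hz
  have hint2 : IntervalIntegrable
      (fun t : ℝ => M * ((1-a)^(-(α/2)) * (1 - t*a)^(α/2 - 1)))
      MeasureTheory.volume 0 1 := by
    apply ContinuousOn.intervalIntegrable
    exact continuousOn_const.mul
      (continuousOn_const.mul (contOn_one_sub_rpow (α/2 - 1) ha0 ha1))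
  calc ‖cesaro (fun w => falpha α ((r:ℂ) * w)) z‖
      ≤ ∫ t in (0:ℝ)..1, ‖falpha α ((r:ℂ) * ((t:ℂ) * z)) / (1 - (t:ℂ) * z)‖ := by
        rw [cesaro]
        exact intervalIntegral.norm_integral_le_integral_norm (by norm_num)
  _ ≤ ∫ t in (0:ℝ)..1, M * ((1-a)^(-(α/2)) * (1 - t*a)^(α/2 - 1)) := by
      apply intervalIntegral.integral_mono_on (by norm_num) _ hint2 bound
      exact (hcont.norm).intervalIntegrable
  _ = (M * (1-a)^(-(α/2))) * ∫ t in (0:ℝ)..1, (1 - t*a)^(α/2 - 1) := by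
      simp only [← intervalIntegral.integral_const_mul, mul_assoc]
  _ ≤ (M * (1-a)^(-(α/2))) * (1/(α/2)) := by
      apply mul_le_mul_of_nonneg_left (integral_ub ha0 ha1 hγ0 hγ1)
      exact mul_nonneg hM0 (Real.rpow_nonneg (by linarith) _)
  _ = M * ((1-a)^(-(α/2)) * (2/α)) := by
      rw [one_div_div]
      ring

end cesbound

lemma log_le_rpow {x γ : ℝ} (hx : 0 < x) (hγ : 0 < γ) : Real.log x ≤ x^γ / γ := by
  have h := Real.log_le_sub_one_of_pos (Real.rpow_pos_of_pos hx γ)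
  rw [Real.log_rpow hx] at h
  rw [le_div_iff₀ hγ, mul_comm]
  nlinarith [Real.rpow_pos_of_pos hx γ]

section bdd
variable {α r : ℝ} {z : ℂ}

lemma weighted_cesaro_le (hα : 0 < α) (hα1 : α < 1) (hr0 : 0 ≤ r) (hr1 : r < 1)
    (hz : ‖z‖ < 1) :
    phiW α (1 - ‖z‖^2) * ‖cesaro (fun w => falpha α ((r:ℂ) * w)) z‖ ≤
      (1 / phiW α (1 - r^2)) *
        (2^(α:ℝ) * ((2*Real.exp (1/α))^(α/2) * (2/α) * (2/α))) := by
  set a := ‖z‖ with ha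
  have ha0 : 0 ≤ a := norm_nonneg z
  have ha1 : a < 1 := hz
  have h1a : (0:ℝ) < 1 - a := by linarith
  set A := 2*Real.exp (1/α) with hA
  have hA0 : (0:ℝ) < A := by positivity
  have hA2 : (2:ℝ) < A := one_lt_A α hα
  have hces := cesaro_g_norm_le hα hα1 hr0 hr1 hz
  have hMpos : 0 < phiW α (1 - r^2) := phi_pos α hα (by nlinarith) (by nlinarith)
  set M := 1 / phiW α (1 - r^2) with hM
  have hM0 : 0 ≤ M := le_of_lt (one_div_pos.mpr hMpos)
  have h1 : (1 - a^2:ℝ)^α ≤ 2^(α:ℝ) * (1-a)^α := by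
    calc (1 - a^2:ℝ)^α ≤ (2*(1-a))^α :=
          Real.rpow_le_rpow (by nlinarith) (by nlinarith) hα.le
    _ = 2^(α:ℝ) * (1-a)^α := Real.mul_rpow (by norm_num) h1a.le
  have h2 : Real.log (A/(1 - a^2)) ≤ (2/α) * (A^(α/2) * (1-a)^(-(α/2))) := by
    have hq : A/(1 - a^2) ≤ A/(1-a) := by
      gcongr
      nlinarith
    have h21 : Real.log (A/(1 - a^2)) ≤ Real.log (A/(1-a)) :=
      Real.log_le_log (div_pos hA0 (by nlinarith)) hq
    have h22 := log_le_rpow (x := A/(1-a)) (div_pos hA0 h1a) (by positivity : (0:ℝ) < α/2)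
    rw [Real.div_rpow hA0.le h1a.le] at h22
    have e : (A^(α/2)/(1-a)^(α/2))/(α/2) = (2/α) * (A^(α/2) * (1-a)^(-(α/2))) := by
      rw [Real.rpow_neg h1a.le]
      have := Real.rpow_pos_of_pos h1a (α/2)
      field_simp
    rw [e] at h22
    linarith
  have hlog0 : 0 ≤ Real.log (A/(1 - a^2)) := by
    apply Real.log_nonneg
    rw [le_div_iff₀ (by nlinarith)]
    nlinarith
  have hphi : phiW α (1 - a^2) ≤
      2^(α:ℝ) * (1-a)^α * ((2/α) * (A^(α/2) * (1-a)^(-(α/2)))) := by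
    rw [phiW, ← hA]
    apply mul_le_mul h1 h2 hlog0
    positivity
  have hcesnn : (0:ℝ) ≤ ‖cesaro (fun w => falpha α ((r:ℂ) * w)) z‖ := norm_nonneg _
  have hrhs0 : 0 ≤ M * ((1-a)^(-(α/2)) * (2/α)) :=
    mul_nonneg hM0 (by positivity)
  calc phiW α (1 - a^2) * ‖cesaro (fun w => falpha α ((r:ℂ) * w)) z‖
      ≤ (2^(α:ℝ) * (1-a)^α * ((2/α) * (A^(α/2) * (1-a)^(-(α/2))))) *
          (M * ((1-a)^(-(α/2)) * (2/α))) := by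
        apply mul_le_mul hphi hces hcesnn
        positivity
  _ = (M * (2^(α:ℝ) * (A^(α/2) * (2/α) * (2/α)))) *
        ((1-a)^α * ((1-a)^(-(α/2)) * (1-a)^(-(α/2)))) := by ring
  _ = M * (2^(α:ℝ) * (A^(α/2) * (2/α) * (2/α))) := by
        have e0 : α + (-(α/2) + -(α/2)) = 0 := by ring
        rw [← Real.rpow_add h1a, ← Real.rpow_add h1a, e0, Real.rpow_zero, mul_one]

end bdd

noncomputable def Freal (α ρ x t : ℝ) : ℝ :=
  (1/((1 - (t*ρ)^2)^α * Real.log (2*Real.exp (1/α)/(1 - (t*ρ)^2)))) / (1 - t*x)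

section lower
variable {α : ℝ}

lemma cesaro_real_repr (hα : 0 < α) {x r : ℝ} (hx0 : 0 < x) (hx1 : x < 1)
    (hr0 : 0 < r) (hr1 : r < 1) :
    cesaro (fun w => falpha α ((r:ℂ) * w)) ((x:ℂ)) =
      (((∫ t in (0:ℝ)..1, Freal α (r*x) x t) : ℝ) : ℂ) := by
  rw [cesaro, ← intervalIntegral.integral_ofReal]
  apply intervalIntegral.integral_congr
  intro t ht
  rw [Set.uIcc_of_le (by norm_num : (0:ℝ) ≤ 1)] at ht
  have h1 : (0:ℝ) ≤ t*(r*x) := mul_nonneg ht.1 (by positivity)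
  have h2 : t*(r*x) < 1 := by
    nlinarith [mul_nonneg (sub_nonneg.mpr ht.2) (mul_pos hr0 hx0).le]
  have e1 : (r:ℂ) * ((t:ℂ) * (x:ℂ)) = ((t*(r*x) : ℝ) : ℂ) := by push_cast; ring
  have e2 : (1:ℂ) - (t:ℂ) * (x:ℂ) = ((1 - t*x : ℝ) : ℂ) := by push_cast; ring
  simp only [e1, e2, falpha_ofReal hα h1 h2, Freal, ← Complex.ofReal_div]

lemma one_le_rpow_neg {u β : ℝ} (hu0 : 0 < u) (hu1 : u ≤ 1) (hβ : 0 ≤ β) :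
    1 ≤ u^(-β) := by
  rw [Real.rpow_neg hu0.le]
  rw [one_le_inv_iff₀]
  exact ⟨Real.rpow_pos_of_pos hu0 _, Real.rpow_le_one hu0.le hu1 hβ⟩

lemma Freal_contOn (hα : 0 < α) {x ρ : ℝ} (hx1 : x < 1) (hρ0 : 0 < ρ) (hρx : ρ ≤ x) :
    ContinuousOn (fun t => Freal α ρ x t) (Set.uIcc 0 1) := by
  have hρ1 : ρ < 1 := lt_of_le_of_lt hρx hx1
  rw [Set.uIcc_of_le (by norm_num : (0:ℝ) ≤ 1)]
  have hpos : ∀ t ∈ Set.Icc (0:ℝ) 1, 0 < 1 - (t*ρ)^2 := by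
    intro t ht
    have h1 : 0 ≤ t*ρ := mul_nonneg ht.1 hρ0.le
    have h2 : t*ρ ≤ ρ := by nlinarith [ht.2]
    nlinarith
  have c1 : ContinuousOn (fun t : ℝ => 1 - (t*ρ)^2) (Set.Icc 0 1) := by fun_prop
  have c2 : ContinuousOn (fun t : ℝ => (1 - (t*ρ)^2)^α) (Set.Icc 0 1) :=
    c1.rpow_const (fun t ht => Or.inl (ne_of_gt (hpos t ht)))
  have c3 : ContinuousOn (fun t : ℝ => Real.log (2*Real.exp (1/α)/(1 - (t*ρ)^2)))
      (Set.Icc 0 1) := by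
    apply ContinuousOn.log
    · exact continuousOn_const.div c1 (fun t ht => ne_of_gt (hpos t ht))
    · intro t ht
      exact ne_of_gt (div_pos (by positivity) (hpos t ht))
  have hlogpos : ∀ t ∈ Set.Icc (0:ℝ) 1,
      0 < Real.log (2*Real.exp (1/α)/(1 - (t*ρ)^2)) := by
    intro t ht
    apply Real.log_pos
    rw [lt_div_iff₀ (hpos t ht)]
    have h1 : 0 ≤ t*ρ := mul_nonneg ht.1 hρ0.le
    nlinarith [one_lt_A α hα, (hpos t ht)]
  unfold Freal
  apply ContinuousOn.div
  · apply continuousOn_const.div (c2.mul c3)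
    intro t ht
    exact ne_of_gt (mul_pos (Real.rpow_pos_of_pos (hpos t ht) α) (hlogpos t ht))
  · fun_prop
  · intro t ht
    have : 0 < 1 - t*x := by nlinarith [ht.1, ht.2, hρ0, hρx, hρ1]
    exact ne_of_gt this

lemma cesaro_lower (hα : 0 < α) (hα1 : α < 1) {x r : ℝ} (hx0 : 0 < x) (hx1 : x < 1)
    (hr0 : 0 < r) (hr1 : r < 1) :
    (1-x^2)^α * ((1-r*x)^(-α) - 1)/(2^(α:ℝ) * (α*(r*x))) ≤
      phiW α (1-x^2) * ‖cesaro (fun w => falpha α ((r:ℂ) * w)) ((x:ℂ))‖ := by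
  have hA0 : (0:ℝ) < 2*Real.exp (1/α) := by positivity
  have hA2 : (2:ℝ) < 2*Real.exp (1/α) := one_lt_A α hα
  set ρ := r*x with hρ
  have hρ0 : 0 < ρ := by positivity
  have hρ1 : ρ < 1 := by nlinarith
  have hρx : ρ ≤ x := by nlinarith
  have hρ2 : (0:ℝ) < 1 - ρ^2 := by nlinarith
  have hx2 : (0:ℝ) < 1 - x^2 := by nlinarith
  set L := Real.log (2*Real.exp (1/α)/(1-ρ^2)) with hLdef
  have hL0 : 0 < L := Real.log_pos (by rw [lt_div_iff₀ hρ2]; nlinarith)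
  have hN0 : 0 ≤ (1-ρ)^(-α) - 1 := by
    have := one_le_rpow_neg (u := 1-ρ) (β := α) (by linarith) (by linarith) hα.le
    linarith
  -- pointwise bound
  have hpt : ∀ t ∈ Set.Icc (0:ℝ) 1,
      (1-t*ρ)^(-1-α) / (2^(α:ℝ) * L) ≤ Freal α ρ x t := by
    intro t ht
    have htρ0 : 0 ≤ t*ρ := mul_nonneg ht.1 hρ0.le
    have htρ1 : t*ρ ≤ ρ := by nlinarith [ht.2]
    have hu0 : 0 < 1 - t*ρ := by nlinarith
    have hu2 : 0 < 1 - (t*ρ)^2 := by nlinarith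
    have hLt0 : 0 < Real.log (2*Real.exp (1/α)/(1 - (t*ρ)^2)) := by
      apply Real.log_pos
      rw [lt_div_iff₀ hu2]; nlinarith
    have d1 : (1 - (t*ρ)^2)^α ≤ 2^(α:ℝ) * (1-t*ρ)^α := by
      calc (1 - (t*ρ)^2)^α ≤ (2*(1-t*ρ))^α :=
            Real.rpow_le_rpow hu2.le (by nlinarith) hα.le
      _ = 2^(α:ℝ) * (1-t*ρ)^α := Real.mul_rpow (by norm_num) hu0.le
    have d2 : Real.log (2*Real.exp (1/α)/(1 - (t*ρ)^2)) ≤ L := by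
      apply Real.log_le_log (div_pos hA0 hu2)
      gcongr
    have d3 : 1 - t*x ≤ 1 - t*ρ := by nlinarith [ht.1]
    have dx0 : 0 < 1 - t*x := by nlinarith [ht.1, ht.2]
    have hD0 : 0 < (1 - (t*ρ)^2)^α * Real.log (2*Real.exp (1/α)/(1 - (t*ρ)^2)) * (1-t*x) :=
      mul_pos (mul_pos (Real.rpow_pos_of_pos hu2 α) hLt0) dx0
    have hrp := Real.rpow_pos_of_pos hu0 α
    have hle : (1 - (t*ρ)^2)^α * Real.log (2*Real.exp (1/α)/(1 - (t*ρ)^2)) * (1-t*x) ≤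
        2^(α:ℝ) * (1-t*ρ)^α * L * (1-t*ρ) := by
      apply mul_le_mul _ d3 dx0.le (by positivity)
      apply mul_le_mul d1 d2 hLt0.le (by positivity)
    have eG : (1-t*ρ)^(-1-α) / (2^(α:ℝ) * L) =
        1/(2^(α:ℝ) * (1-t*ρ)^α * L * (1-t*ρ)) := by
      rw [show (-1-α:ℝ) = -(1+α) by ring, Real.rpow_neg hu0.le,
        Real.rpow_add hu0, Real.rpow_one]
      rw [mul_inv]
      have h2α : (0:ℝ) < 2^(α:ℝ) := by positivity
      field_simp
    rw [eG]
    have eF : Freal α ρ x t =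
        1/((1 - (t*ρ)^2)^α * Real.log (2*Real.exp (1/α)/(1 - (t*ρ)^2)) * (1-t*x)) := by
      rw [Freal, div_div]
    rw [eF]
    exact one_div_le_one_div_of_le hD0 hle
  -- integrability
  have hFc := Freal_contOn (α := α) hα hx1 hρ0 hρx
  have hFint : IntervalIntegrable (fun t => Freal α ρ x t) MeasureTheory.volume 0 1 :=
    hFc.intervalIntegrable
  have hGint : IntervalIntegrable (fun t : ℝ => (1-t*ρ)^(-1-α) / (2^(α:ℝ) * L))
      MeasureTheory.volume 0 1 :=
    ((contOn_one_sub_rpow (-1-α) hρ0.le hρ1).div_const _).intervalIntegrable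
  have hmono := intervalIntegral.integral_mono_on (by norm_num : (0:ℝ) ≤ 1) hGint hFint hpt
  have hGval : (∫ t in (0:ℝ)..1, (1-t*ρ)^(-1-α) / (2^(α:ℝ) * L)) =
      (((1-ρ)^(-α) - 1)/(α*ρ)) / (2^(α:ℝ) * L) := by
    rw [intervalIntegral.integral_div, integral_lb hρ0 hρ1 hα]
  have hGnn : 0 ≤ (((1-ρ)^(-α) - 1)/(α*ρ)) / (2^(α:ℝ) * L) := by
    apply div_nonneg (div_nonneg hN0 (by positivity))
    positivity
  have hInn : (((1-ρ)^(-α) - 1)/(α*ρ)) / (2^(α:ℝ) * L) ≤ ∫ t in (0:ℝ)..1, Freal α ρ x t := by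
    rw [← hGval]; exact hmono
  have hphi0 : 0 < phiW α (1-x^2) := phi_pos α hα hx2 (by nlinarith)
  have hnorm : (((1-ρ)^(-α) - 1)/(α*ρ)) / (2^(α:ℝ) * L) ≤
      ‖cesaro (fun w => falpha α ((r:ℂ) * w)) ((x:ℂ))‖ := by
    rw [cesaro_real_repr hα hx0 hx1 hr0 hr1, Complex.norm_real]
    exact le_trans hInn (le_abs_self _)
  have hLx : L ≤ Real.log (2*Real.exp (1/α)/(1-x^2)) := by
    apply Real.log_le_log (div_pos hA0 hρ2)
    gcongr
  have hLHS0 : 0 ≤ (1-x^2)^α * ((1-ρ)^(-α) - 1)/(2^(α:ℝ) * (α*ρ)) := by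
    apply div_nonneg (mul_nonneg (Real.rpow_nonneg hx2.le α) hN0)
    positivity
  have step : phiW α (1-x^2) * ((((1-ρ)^(-α) - 1)/(α*ρ)) / (2^(α:ℝ) * L)) ≤
      phiW α (1-x^2) * ‖cesaro (fun w => falpha α ((r:ℂ) * w)) ((x:ℂ))‖ :=
    mul_le_mul_of_nonneg_left hnorm hphi0.le
  refine le_trans ?_ step
  rw [phiW]
  have e3 : (1-x^2)^α * Real.log (2*Real.exp (1/α)/(1-x^2)) *
      ((((1-ρ)^(-α) - 1)/(α*ρ)) / (2^(α:ℝ) * L)) =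
      ((1-x^2)^α * ((1-ρ)^(-α) - 1)/(2^(α:ℝ) * (α*ρ))) *
        (Real.log (2*Real.exp (1/α)/(1-x^2)) / L) := by
    have h2α : (0:ℝ) < 2^(α:ℝ) := by positivity
    field_simp
  rw [e3]
  have h1le : 1 ≤ Real.log (2*Real.exp (1/α)/(1-x^2)) / L := (one_le_div hL0).mpr hLx
  nlinarith [mul_le_mul_of_nonneg_left h1le hLHS0]

end lower

lemma weight_zero {α : ℝ} (hα : 0 < α) {r : ℝ} :
    (1 - ‖(0:ℂ)‖^2)^α * Real.log (2*Real.exp (1/α)/(1-‖(0:ℂ)‖^2)) *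
      ‖falpha α ((r:ℂ) * 0)‖ = 1 := by
  have hlogA : 0 < Real.log (2*Real.exp (1/α)) := by
    rw [logA α hα]
    positivity
  have h0 : falpha α ((r:ℂ) * 0) = ((1 / Real.log (2*Real.exp (1/α)) : ℝ) : ℂ) := by
    rw [mul_zero, show (0:ℂ) = ((0:ℝ):ℂ) by norm_num,
      falpha_ofReal hα (le_refl 0) (by norm_num)]
    norm_num
  rw [h0, Complex.norm_real, Real.norm_of_nonneg (by positivity)]
  simp only [norm_zero]
  rw [show (0:ℝ)^2 = 0 by norm_num, sub_zero, Real.one_rpow, div_one]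
  field_simp

theorem cesaro_stmt_12 (α : ℝ) (hα : 0 < α) (hα1 : α < 1) :
    ∀ c : ℝ, (∀ f : ℂ → ℂ, DifferentiableOn ℂ f (Metric.ball 0 1) →
      BddAbove {y : ℝ | ∃ z : ℂ, ‖z‖ < 1 ∧
        y = (1 - ‖z‖ ^ 2) ^ α * Real.log (2 * Real.exp (1 / α) / (1 - ‖z‖ ^ 2)) * ‖f z‖} →
      korenblumLogNorm α (cesaro f) ≤ c * korenblumLogNorm α f) →
    1 / α ≤ c := by
  intro c hc
  have key : ∀ x : ℝ, x ∈ Set.Ioo (0:ℝ) 1 →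
      (1-x^2)^α * ((1-(1-(1-x)^2)*x)^(-α) - 1)/(2^(α:ℝ) * (α*((1-(1-x)^2)*x))) ≤ c := by
    intro x hx
    obtain ⟨hx0, hx1⟩ := hx
    set r := 1-(1-x)^2 with hrdef
    have hr0 : 0 < r := by nlinarith
    have hr1 : r < 1 := by nlinarith
    set g := fun w : ℂ => falpha α ((r:ℂ)*w) with hg
    have hdiff : DifferentiableOn ℂ g (Metric.ball 0 1) := by
      intro z hz
      rw [Metric.mem_ball, dist_zero_right] at hz
      have hrz : ‖(r:ℂ)*z‖ < 1 := by
        rw [norm_mul, Complex.norm_real, Real.norm_of_nonneg hr0.le]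
        nlinarith [norm_nonneg z]
      have h1 : DifferentiableAt ℂ (fun w : ℂ => (r:ℂ)*w) z := by fun_prop
      exact ((falpha_diffAt hα hrz).comp z h1).differentiableWithinAt
    have hbound : ∀ y ∈ {y : ℝ | ∃ z : ℂ, ‖z‖ < 1 ∧
        y = (1 - ‖z‖ ^ 2) ^ α * Real.log (2 * Real.exp (1 / α) / (1 - ‖z‖ ^ 2)) * ‖g z‖},
        y ≤ 1 := by
      rintro y ⟨z, hz, rfl⟩
      have hrz : ‖(r:ℂ)*z‖ < 1 := by
        rw [norm_mul, Complex.norm_real, Real.norm_of_nonneg hr0.le]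
        nlinarith [norm_nonneg z]
      have hle1 : 1-‖z‖^2 ≤ 1-‖(r:ℂ)*z‖^2 := by
        rw [norm_mul, Complex.norm_real, Real.norm_of_nonneg hr0.le]
        nlinarith [norm_nonneg z, mul_nonneg (by nlinarith : (0:ℝ) ≤ 1-r^2) (sq_nonneg ‖z‖)]
      have hs0 : (0:ℝ) < 1-‖z‖^2 := by nlinarith [norm_nonneg z]
      have hm := phi_mono α hα hα1
        (Set.mem_Ioc.mpr ⟨hs0, by nlinarith [norm_nonneg z]⟩)
        (Set.mem_Ioc.mpr ⟨by nlinarith [norm_nonneg ((r:ℂ)*z)],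
          by nlinarith [norm_nonneg ((r:ℂ)*z)]⟩) hle1
      show phiW α (1-‖z‖^2) * ‖g z‖ ≤ 1
      calc phiW α (1-‖z‖^2) * ‖g z‖
          ≤ phiW α (1-‖(r:ℂ)*z‖^2) * ‖falpha α ((r:ℂ)*z)‖ :=
            mul_le_mul_of_nonneg_right hm (norm_nonneg _)
      _ ≤ 1 := weighted_norm_falpha_le hα hα1 hrz
    have hbdd : BddAbove {y : ℝ | ∃ z : ℂ, ‖z‖ < 1 ∧
        y = (1 - ‖z‖ ^ 2) ^ α * Real.log (2 * Real.exp (1 / α) / (1 - ‖z‖ ^ 2)) * ‖g z‖} :=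
      ⟨1, fun y hy => hbound y hy⟩
    have hone : (1:ℝ) ∈ {y : ℝ | ∃ z : ℂ, ‖z‖ < 1 ∧
        y = (1 - ‖z‖ ^ 2) ^ α * Real.log (2 * Real.exp (1 / α) / (1 - ‖z‖ ^ 2)) * ‖g z‖} :=
      ⟨0, by norm_num, (weight_zero hα).symm⟩
    have hnorm1 : korenblumLogNorm α g = 1 := by
      rw [korenblumLogNorm]
      exact le_antisymm (csSup_le ⟨1, hone⟩ hbound) (le_csSup ⟨1, fun y hy => hbound y hy⟩ hone)
    have hcesbdd : BddAbove {y : ℝ | ∃ z : ℂ, ‖z‖ < 1 ∧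
        y = (1 - ‖z‖ ^ 2) ^ α * Real.log (2 * Real.exp (1 / α) / (1 - ‖z‖ ^ 2)) *
          ‖cesaro g z‖} := by
      refine ⟨(1 / phiW α (1 - r^2)) *
        (2^(α:ℝ) * ((2*Real.exp (1/α))^(α/2) * (2/α) * (2/α))), ?_⟩
      rintro y ⟨z, hz, rfl⟩
      exact weighted_cesaro_le hα hα1 hr0.le hr1 hz
    have hxnorm : ‖((x:ℂ))‖ = x := by
      rw [Complex.norm_real, Real.norm_of_nonneg hx0.le]
    have hmem : phiW α (1-x^2) * ‖cesaro g ((x:ℂ))‖ ∈ {y : ℝ | ∃ z : ℂ, ‖z‖ < 1 ∧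
        y = (1 - ‖z‖ ^ 2) ^ α * Real.log (2 * Real.exp (1 / α) / (1 - ‖z‖ ^ 2)) *
          ‖cesaro g z‖} := by
      refine ⟨(x:ℂ), by rw [hxnorm]; exact hx1, ?_⟩
      rw [hxnorm, phiW]
    have hsup : phiW α (1-x^2) * ‖cesaro g ((x:ℂ))‖ ≤ korenblumLogNorm α (cesaro g) := by
      rw [korenblumLogNorm]
      exact le_csSup hcesbdd hmem
    have hfin := hc g hdiff hbdd
    rw [hnorm1, mul_one] at hfin
    have hlow := cesaro_lower hα hα1 hx0 hx1 hr0 hr1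
    exact le_trans hlow (le_trans hsup hfin)
  -- limit argument
  set G : ℝ → ℝ := fun x =>
    (((1+x)/(1+x*(1-x)))^α - (1-x^2)^α)/(2^(α:ℝ) * (α*((1-(1-x)^2)*x))) with hGdef
  have hIoo : Set.Ioo (0:ℝ) 1 ∈ nhdsWithin (1:ℝ) (Set.Iio 1) :=
    Ioo_mem_nhdsLT_of_mem (by norm_num : (1:ℝ) ∈ Set.Ioc 0 1)
  have hEq : ∀ x ∈ Set.Ioo (0:ℝ) 1,
      G x = (1-x^2)^α * ((1-(1-(1-x)^2)*x)^(-α) - 1)/(2^(α:ℝ) * (α*((1-(1-x)^2)*x))) := by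
    intro x hx
    obtain ⟨hx0, hx1⟩ := hx
    have h1x : (0:ℝ) < 1-x := by linarith
    have hq : (0:ℝ) < 1+x*(1-x) := by nlinarith
    have hfac : 1-(1-(1-x)^2)*x = (1-x)*(1+x*(1-x)) := by ring
    have e1 : (1-(1-(1-x)^2)*x)^(-α) = (1-x)^(-α) * (1+x*(1-x))^(-α) := by
      rw [hfac, Real.mul_rpow h1x.le hq.le]
    have e2 : (1-x^2:ℝ)^α = (1-x)^α * (1+x)^α := by
      rw [show (1-x^2:ℝ) = (1-x)*(1+x) by ring, Real.mul_rpow h1x.le (by linarith)]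
    have e3 : ((1+x)/(1+x*(1-x)))^α = (1+x)^α * (1+x*(1-x))^(-α) := by
      rw [Real.div_rpow (by linarith) hq.le, Real.rpow_neg hq.le, div_eq_mul_inv]
    have e4 : (1-x:ℝ)^α * (1-x)^(-α) = 1 := by
      rw [← Real.rpow_add h1x]
      norm_num
    show (((1+x)/(1+x*(1-x)))^α - (1-x^2)^α)/(2^(α:ℝ) * (α*((1-(1-x)^2)*x))) = _
    congr 1
    rw [e1, e2, e3]
    linear_combination (-((1+x)^α * (1+x*(1-x))^(-α))) * e4
  have hGcont : ContinuousAt G 1 := by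
    have n1 : ContinuousAt (fun x : ℝ => (1+x)/(1+x*(1-x))) 1 :=
      ContinuousAt.div (by fun_prop) (by fun_prop) (by norm_num)
    have n2 : ContinuousAt (fun y : ℝ => y^α) ((fun x : ℝ => (1+x)/(1+x*(1-x))) 1) :=
      Real.continuousAt_rpow_const _ _ (Or.inl (by norm_num))
    have n12c : ContinuousAt ((fun y : ℝ => y^α) ∘ (fun x : ℝ => (1+x)/(1+x*(1-x)))) 1 :=
      ContinuousAt.comp (f := fun x : ℝ => (1+x)/(1+x*(1-x))) (x := (1:ℝ)) n2 n1
    have n12 : ContinuousAt (fun x : ℝ => ((1+x)/(1+x*(1-x)))^α) 1 := n12c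
    have n3 : ContinuousAt (fun x : ℝ => (1-x^2)^α) 1 := by
      have h0 : ContinuousAt (fun y : ℝ => y^α) ((fun x : ℝ => 1-x^2) 1) := by
        rw [show ((fun x : ℝ => 1-x^2) 1) = 0 by norm_num]
        exact Real.continuousAt_rpow_const 0 α (Or.inr hα.le)
      have n3c : ContinuousAt ((fun y : ℝ => y^α) ∘ (fun x : ℝ => 1-x^2)) 1 :=
        ContinuousAt.comp (f := fun x : ℝ => 1-x^2) (x := (1:ℝ)) h0 (by fun_prop)
      exact n3c
    have n4 : ContinuousAt (fun x : ℝ => 2^(α:ℝ) * (α*((1-(1-x)^2)*x))) 1 := by fun_prop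
    have n4ne : 2^(α:ℝ) * (α*((1-(1-(1:ℝ))^2)*1)) ≠ 0 := by
      have : (0:ℝ) < 2^(α:ℝ) := by positivity
      simp only [sub_self]
      push_cast
      nlinarith
    exact (n12.sub n3).div n4 n4ne
  have hGval : G 1 = 1/α := by
    show (((1+(1:ℝ))/(1+1*(1-1)))^α - (1-(1:ℝ)^2)^α)/(2^(α:ℝ) * (α*((1-(1-(1:ℝ))^2)*1))) = 1/α
    norm_num
    rw [Real.zero_rpow (ne_of_gt hα)]
    have h2α : (0:ℝ) < 2^(α:ℝ) := by positivity
    field_simp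
    rw [sub_zero]
  have htendG : Filter.Tendsto G (nhdsWithin (1:ℝ) (Set.Iio 1)) (nhds (1/α)) := by
    have := hGcont.tendsto
    rw [hGval] at this
    exact this.mono_left nhdsWithin_le_nhds
  have htendLB : Filter.Tendsto (fun x : ℝ =>
      (1-x^2)^α * ((1-(1-(1-x)^2)*x)^(-α) - 1)/(2^(α:ℝ) * (α*((1-(1-x)^2)*x))))
      (nhdsWithin (1:ℝ) (Set.Iio 1)) (nhds (1/α)) := by
    apply htendG.congr'
    filter_upwards [hIoo] with x hx
    exact hEq x hx
  apply le_of_tendsto htendLB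
  filter_upwards [hIoo] with x hx
  exact key x hx
end

section
/- For α > 1, the norm of the Cesàro operator 𝒞 on the α-Bloch space ℬ^α (with norm ‖f‖ = |f(0)| + sup_{z∈𝔻}(1-|z|²)^α|f'(z)|) is at least 3/2. -/
open MeasureTheory Metric Set intervalIntegral

/-- The `α`-Bloch norm `‖f‖ = |f(0)| + sup_{z∈𝔻}(1-|z|²)^α |f'(z)|`. -/
noncomputable def blochNorm (α : ℝ) (f : ℂ → ℂ) : ℝ :=
  ‖f 0‖ + sSup {y : ℝ | ∃ z : ℂ, ‖z‖ < 1 ∧ y = (1 - ‖z‖ ^ 2) ^ α * ‖deriv f z‖}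

lemma den_lb (t : ℝ) (ht : 0 ≤ t) (x : ℂ) :
    1 - t * ‖x‖ ≤ ‖1 - (t:ℂ) * x‖ := by
  have h := norm_sub_norm_le (1:ℂ) ((t:ℂ)*x)
  rwa [norm_one, norm_mul, Complex.norm_real, Real.norm_eq_abs, abs_of_nonneg ht] at h

lemma den_pos (t : ℝ) (ht : t ∈ Set.Icc (0:ℝ) 1) (x : ℂ) (hx : ‖x‖ < 1) :
    0 < ‖1 - (t:ℂ) * x‖ := by
  have h1 := den_lb t ht.1 x
  nlinarith [ht.1, ht.2, norm_nonneg x]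

lemma den_ne (t : ℝ) (ht : t ∈ Set.Icc (0:ℝ) 1) (x : ℂ) (hx : ‖x‖ < 1) :
    1 - (t:ℂ) * x ≠ 0 := by
  have := den_pos t ht x hx; intro h; rw [h] at this; simp at this

lemma cesaro_one_hasDerivAt (z₀ : ℂ) (hz : ‖z₀‖ < 1) :
    HasDerivAt (cesaro (fun _ => 1))
      (∫ t in (0:ℝ)..1, (t:ℂ) / (1 - (t:ℂ) * z₀)^2) z₀ := by
  set r : ℝ := (1 + ‖z₀‖) / 2 with hr_def
  have hr1 : r < 1 := by rw [hr_def]; linarith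
  have hr0 : 0 ≤ r := by rw [hr_def]; positivity
  set ε : ℝ := (1 - ‖z₀‖) / 2 with hε_def
  have hε : 0 < ε := by rw [hε_def]; linarith
  have hball : ∀ x ∈ ball z₀ ε, ‖x‖ < r := by
    intro x hx
    have : ‖x - z₀‖ < ε := by simpa [dist_eq_norm] using hx
    calc ‖x‖ ≤ ‖x - z₀‖ + ‖z₀‖ := by simpa using norm_add_le (x - z₀) z₀
    _ < ε + ‖z₀‖ := by linarith
    _ = r := by rw [hε_def, hr_def]; ring
  -- the parametric family
  have key := intervalIntegral.hasDerivAt_integral_of_dominated_loc_of_deriv_le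
    (F := fun (x : ℂ) (t : ℝ) => (1 : ℂ) / (1 - (t:ℂ) * x))
    (F' := fun (x : ℂ) (t : ℝ) => (t:ℂ) / (1 - (t:ℂ) * x)^2)
    (x₀ := z₀) (a := (0:ℝ)) (b := 1) (μ := volume)
    (bound := fun _ => ((1 - r)^2)⁻¹) (Metric.ball_mem_nhds z₀ hε) ?meas ?int ?meas' ?bound ?bint ?diff
  · have heq : cesaro (fun _ => 1) = fun x : ℂ => ∫ t in (0:ℝ)..1, (1:ℂ)/(1 - (t:ℂ)*x) := by
      funext x; simp [cesaro]
    rw [heq]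
    exact key.2
  case meas =>
    filter_upwards [Metric.ball_mem_nhds z₀ hε] with x hx
    apply ContinuousOn.aestronglyMeasurable _ measurableSet_uIoc
    intro t ht
    have ht' : t ∈ Set.Icc (0:ℝ) 1 := by
      rw [Set.uIoc_of_le (by norm_num : (0:ℝ) ≤ 1)] at ht
      exact ⟨le_of_lt ht.1, ht.2⟩
    exact ContinuousOn.div continuousOn_const
      (Continuous.continuousOn (by continuity))
      (fun s hs => den_ne s (by
        rw [Set.uIoc_of_le (by norm_num : (0:ℝ) ≤ 1)] at hs
        exact ⟨le_of_lt hs.1, hs.2⟩) x ((hball x hx).trans hr1)) t ht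
  case int =>
    apply ContinuousOn.intervalIntegrable
    exact ContinuousOn.div continuousOn_const
      (Continuous.continuousOn (by continuity))
      (fun s hs => den_ne s (by rwa [Set.uIcc_of_le (by norm_num : (0:ℝ) ≤ 1)] at hs) z₀ hz)
  case meas' =>
    apply ContinuousOn.aestronglyMeasurable _ measurableSet_uIoc
    apply ContinuousOn.div (Continuous.continuousOn (by continuity))
      (Continuous.continuousOn (by continuity))
    intro s hs
    rw [Set.uIoc_of_le (by norm_num : (0:ℝ) ≤ 1)] at hs
    exact pow_ne_zero 2 (den_ne s ⟨le_of_lt hs.1, hs.2⟩ z₀ hz)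
  case bound =>
    apply Filter.Eventually.of_forall
    intro t ht x hx
    rw [Set.uIoc_of_le (by norm_num : (0:ℝ) ≤ 1)] at ht
    have ht' : t ∈ Set.Icc (0:ℝ) 1 := ⟨le_of_lt ht.1, ht.2⟩
    have hxr := hball x hx
    have h1 : 1 - r ≤ ‖1 - (t:ℂ)*x‖ := by
      have := den_lb t ht'.1 x
      nlinarith [ht'.1, ht'.2, norm_nonneg x]
    have h1r : 0 < 1 - r := by linarith
    rw [norm_div, norm_pow, Complex.norm_real, Real.norm_eq_abs, abs_of_nonneg ht'.1]
    rw [div_le_iff₀ (by nlinarith)]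
    calc t ≤ 1 := ht'.2
    _ ≤ ((1-r)^2)⁻¹ * (1-r)^2 := by rw [inv_mul_cancel₀ (by positivity)]
    _ ≤ ((1-r)^2)⁻¹ * ‖1 - (t:ℂ)*x‖^2 := by
        apply mul_le_mul_of_nonneg_left _ (by positivity)
        exact pow_le_pow_left₀ (by linarith) h1 2
  case bint => exact intervalIntegrable_const
  case diff =>
    apply Filter.Eventually.of_forall
    intro t ht x hx
    rw [Set.uIoc_of_le (by norm_num : (0:ℝ) ≤ 1)] at ht
    have ht' : t ∈ Set.Icc (0:ℝ) 1 := ⟨le_of_lt ht.1, ht.2⟩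
    have hne : 1 - (t:ℂ)*x ≠ 0 := den_ne t ht' x ((hball x hx).trans hr1)
    have hd : HasDerivAt (fun y : ℂ => 1 - (t:ℂ)*y) (-(t:ℂ)) x := by
      simpa using ((hasDerivAt_id x).const_mul (t:ℂ)).const_sub (1:ℂ)
    have := hd.inv hne
    simp only [one_div]
    convert this using 1
    · rfl
    · rfl
    · rw [neg_neg]

lemma integral_inv_sq (r : ℝ) (hr0 : 0 ≤ r) (hr1 : r < 1) :
    ∫ t in (0:ℝ)..1, ((1 - t*r)^2)⁻¹ = (1 - r)⁻¹ := by
  rcases eq_or_lt_of_le hr0 with h0 | h0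
  · simp [← h0]
  · have hden : ∀ t ∈ Set.uIcc (0:ℝ) 1, 1 - t*r ≠ 0 := by
      intro t ht
      rw [Set.uIcc_of_le (by norm_num : (0:ℝ) ≤ 1)] at ht
      nlinarith [ht.1, ht.2]
    have := intervalIntegral.integral_eq_sub_of_hasDerivAt
      (f := fun t : ℝ => r⁻¹ * (1 - t*r)⁻¹) (f' := fun t : ℝ => ((1 - t*r)^2)⁻¹)
      (a := 0) (b := 1) ?_ ?_
    · rw [this]
      have h1 : (1:ℝ) - r ≠ 0 := by intro h; nlinarith
      have h2 : r ≠ 0 := ne_of_gt h0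
      field_simp
      ring
    · intro t ht
      have hne := hden t ht
      have hd : HasDerivAt (fun t : ℝ => 1 - t*r) (-r) t := by
        simpa using ((hasDerivAt_id t).mul_const r).const_sub (1:ℝ)
      have := (hd.inv hne).const_mul r⁻¹
      convert this using 1
      · rfl
      · rfl
      · field_simp
    · apply ContinuousOn.intervalIntegrable
      exact ContinuousOn.inv₀ (Continuous.continuousOn (by continuity))
        (fun t ht => pow_ne_zero 2 (hden t ht))

lemma deriv_bound (z : ℂ) (hz : ‖z‖ < 1) :
    ‖deriv (cesaro (fun _ => 1)) z‖ ≤ (1 - ‖z‖)⁻¹ := by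
  rw [(cesaro_one_hasDerivAt z hz).deriv]
  set r := ‖z‖ with hr
  have hr0 : 0 ≤ r := norm_nonneg z
  have hle : ‖∫ t in (0:ℝ)..1, (t:ℂ) / (1 - (t:ℂ) * z)^2‖
      ≤ |∫ t in (0:ℝ)..1, ((1 - t*r)^2)⁻¹| := by
    apply intervalIntegral.norm_integral_le_abs_of_norm_le
    · rw [ae_restrict_iff' measurableSet_uIoc]
      apply Filter.Eventually.of_forall
      intro t ht
      rw [Set.uIoc_of_le (by norm_num : (0:ℝ) ≤ 1)] at ht
      have ht' : t ∈ Set.Icc (0:ℝ) 1 := ⟨le_of_lt ht.1, ht.2⟩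
      have h1 : 1 - t*r ≤ ‖1 - (t:ℂ)*z‖ := den_lb t ht'.1 z
      have h2 : 0 < 1 - t*r := by nlinarith [ht'.1, ht'.2]
      rw [norm_div, norm_pow, Complex.norm_real, Real.norm_eq_abs, abs_of_nonneg ht'.1]
      rw [div_le_iff₀ (by nlinarith)]
      calc t ≤ 1 := ht'.2
      _ = ((1-t*r)^2)⁻¹ * (1-t*r)^2 := by rw [inv_mul_cancel₀ (by positivity)]
      _ ≤ ((1-t*r)^2)⁻¹ * ‖1 - (t:ℂ)*z‖^2 := by
          apply mul_le_mul_of_nonneg_left _ (by positivity)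
          exact pow_le_pow_left₀ (by linarith) h1 2
    · apply ContinuousOn.intervalIntegrable
      apply ContinuousOn.inv₀ (Continuous.continuousOn (by continuity))
      intro t ht
      rw [Set.uIcc_of_le (by norm_num : (0:ℝ) ≤ 1)] at ht
      have h2 : 0 < 1 - t*r := by nlinarith [ht.1, ht.2]
      positivity
  rw [integral_inv_sq r hr0 hz] at hle
  have h3 : (0:ℝ) < 1 - r := by linarith
  rwa [abs_of_nonneg (by positivity)] at hle

lemma deriv_at_zero : deriv (cesaro (fun _ => 1)) 0 = 1/2 := by
  rw [(cesaro_one_hasDerivAt 0 (by simp)).deriv]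
  have : ∀ t : ℝ, (t:ℂ) / (1 - (t:ℂ) * 0)^2 = (t:ℂ) := by intro t; simp
  simp_rw [this]
  rw [intervalIntegral.integral_ofReal]
  norm_num

lemma cesaro_one_zero : cesaro (fun _ => 1) 0 = 1 := by
  simp [cesaro]


theorem cesaro_stmt_15 (α : ℝ) (hα : 1 < α) :
    ∀ c : ℝ, (∀ f : ℂ → ℂ, DifferentiableOn ℂ f (Metric.ball 0 1) →
      BddAbove {y : ℝ | ∃ z : ℂ, ‖z‖ < 1 ∧ y = (1 - ‖z‖ ^ 2) ^ α * ‖deriv f z‖} →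
      blochNorm α (cesaro f) ≤ c * blochNorm α f) →
    3 / 2 ≤ c := by
  intro c h
  have hset1 : {y : ℝ | ∃ z : ℂ, ‖z‖ < 1 ∧
      y = (1 - ‖z‖ ^ 2) ^ α * ‖deriv (fun _ : ℂ => (1:ℂ)) z‖} = {0} := by
    ext y
    simp only [Set.mem_setOf_eq, Set.mem_singleton_iff]
    constructor
    · rintro ⟨z, hz, rfl⟩; simp
    · rintro rfl; exact ⟨0, by simp, by simp⟩
  have hb1 : blochNorm α (fun _ => (1:ℂ)) = 1 := by
    unfold blochNorm; rw [hset1]; simp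
  have hkey := h (fun _ => 1) (differentiableOn_const 1) (by rw [hset1]; exact bddAbove_singleton)
  rw [hb1, mul_one] at hkey
  set S := {y : ℝ | ∃ z : ℂ, ‖z‖ < 1 ∧
      y = (1 - ‖z‖ ^ 2) ^ α * ‖deriv (cesaro fun _ => 1) z‖} with hS
  have hBdd : BddAbove S := by
    refine ⟨2, ?_⟩
    rintro y ⟨z, hz, rfl⟩
    have h1 := deriv_bound z hz
    have hr0 : (0:ℝ) ≤ ‖z‖ := norm_nonneg z
    have hpos : (0:ℝ) < 1 - ‖z‖^2 := by nlinarith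
    have h2 : (1 - ‖z‖^2 : ℝ)^α ≤ 1 - ‖z‖^2 := by
      calc (1 - ‖z‖^2 : ℝ)^α ≤ (1 - ‖z‖^2 : ℝ)^(1:ℝ) :=
        Real.rpow_le_rpow_of_exponent_ge hpos (by nlinarith) (le_of_lt hα)
      _ = 1 - ‖z‖^2 := Real.rpow_one _
    have hinvpos : (0:ℝ) ≤ (1 - ‖z‖)⁻¹ := by
      have : (0:ℝ) < 1 - ‖z‖ := by linarith
      positivity
    calc (1 - ‖z‖ ^ 2) ^ α * ‖deriv (cesaro fun _ => 1) z‖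
        ≤ (1 - ‖z‖^2) * (1 - ‖z‖)⁻¹ :=
          mul_le_mul h2 h1 (norm_nonneg _) (le_of_lt hpos)
      _ = (1 + ‖z‖) * ((1 - ‖z‖) * (1 - ‖z‖)⁻¹) := by ring
      _ = 1 + ‖z‖ := by
          have hne : (1:ℝ) - ‖z‖ ≠ 0 := by intro hc; nlinarith
          rw [mul_inv_cancel₀ hne, mul_one]
      _ ≤ 2 := by linarith
  have hmem : (1/2 : ℝ) ∈ S := by
    refine ⟨0, by simp, ?_⟩
    rw [deriv_at_zero]
    simp [Real.one_rpow]
  have hsup : (1/2 : ℝ) ≤ sSup S := le_csSup hBdd hmem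
  have hlow : (3/2 : ℝ) ≤ blochNorm α (cesaro fun _ => 1) := by
    unfold blochNorm
    rw [cesaro_one_zero]
    rw [← hS]
    simp only [norm_one]
    linarith
  linarith
end

section
/- The function h(r) = ((1-r²)/r²)·( 3r/(2(1-r)) - (1/4)·log((1+r)/(1-r)⁵) ), defined for 0 < r < 1, has the power series expansion h(r) = 1 + r + Σ_{n≥2} ( 5/(2n(n+2)) + (-1)^{n-1}/(2n(n+2)) ) rⁿ; in particular h is strictly increasing on (0,1) and lim_{r→1⁻} h(r) = 3. -/
open Real Filter Set

lemma cesaro16_hasSum {r : ℝ} (h0 : 0 < r) (h1 : r < 1) :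
    HasSum (fun n : ℕ =>
      (5 / (2 * ((n : ℝ) + 2) * ((n : ℝ) + 4)) +
        (-1 : ℝ) ^ (n + 1) / (2 * ((n : ℝ) + 2) * ((n : ℝ) + 4))) * r ^ (n + 2))
      ((1 - r ^ 2) / r ^ 2 *
        (3 * r / (2 * (1 - r)) - 1 / 4 * Real.log ((1 + r) / (1 - r) ^ 5)) - 1 - r) := by
  have hr0 : r ≠ 0 := ne_of_gt h0
  have hr1 : (0:ℝ) < 1 - r := by linarith
  have hr2 : (0:ℝ) < 1 + r := by linarith
  have habs : |r| < 1 := by rw [abs_of_pos h0]; exact h1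
  have habs' : |(-r)| < 1 := by rwa [abs_neg]
  have B1 : HasSum (fun n : ℕ => r ^ (n + 1) / (n + 1)) (-Real.log (1 - r)) :=
    Real.hasSum_pow_div_log_of_abs_lt_one habs
  have B2 : HasSum (fun n : ℕ => -((-r) ^ (n + 1) / (n + 1))) (Real.log (1 + r)) := by
    have := (Real.hasSum_pow_div_log_of_abs_lt_one habs').neg
    simpa [sub_neg_eq_add] using this
  have A1 := (hasSum_nat_add_iff' (f := fun n : ℕ => r ^ (n + 1) / (n + 1)) 1).2 B1
  have A2 := ((hasSum_nat_add_iff' (f := fun n : ℕ => r ^ (n + 1) / (n + 1)) 3).2 B1).div_const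
    (r ^ 2)
  have A3 := (hasSum_nat_add_iff' (f := fun n : ℕ => -((-r) ^ (n + 1) / (n + 1))) 1).2 B2
  have A4 := ((hasSum_nat_add_iff' (f := fun n : ℕ => -((-r) ^ (n + 1) / (n + 1))) 3).2 B2).div_const
    (r ^ 2)
  have H := ((A1.sub A2).mul_left (5/4)).add ((A3.sub A4).mul_left (1/4))
  have hlog : Real.log ((1 + r) / (1 - r) ^ 5) = Real.log (1 + r) - 5 * Real.log (1 - r) := by
    rw [Real.log_div (by positivity) (by positivity), Real.log_pow]
    push_cast; ring
  convert H using 1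
  · rfl
  · funext n
    have hn2 : ((n : ℝ) + 2) ≠ 0 := by positivity
    have hn4 : ((n : ℝ) + 4) ≠ 0 := by positivity
    have e1 : (-r) ^ (n + 1 + 1) = (-1) ^ n * r ^ (n + 2) := by
      rw [neg_pow]; ring_nf
    have e2 : (-r) ^ (n + 3 + 1) = (-1) ^ n * r ^ (n + 4) := by
      rw [neg_pow]; ring_nf
    have e3 : (-1 : ℝ) ^ (n + 1) = (-1) ^ n * (-1) := by rw [pow_succ]
    push_cast
    rw [e3, e1, e2]
    field_simp
    ring
  · simp only [Finset.sum_range_succ, Finset.sum_range_one]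
    rw [hlog]
    push_cast
    field_simp
    ring

theorem cesaro_stmt_16 :
    (∀ r : ℝ, 0 < r → r < 1 →
      (1 - r ^ 2) / r ^ 2 *
          (3 * r / (2 * (1 - r)) - 1 / 4 * Real.log ((1 + r) / (1 - r) ^ 5)) =
        1 + r + ∑' n : ℕ,
          (5 / (2 * ((n : ℝ) + 2) * ((n : ℝ) + 4)) +
            (-1 : ℝ) ^ (n + 1) / (2 * ((n : ℝ) + 2) * ((n : ℝ) + 4))) * r ^ (n + 2)) ∧
    StrictMonoOn
      (fun r : ℝ => (1 - r ^ 2) / r ^ 2 *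
        (3 * r / (2 * (1 - r)) - 1 / 4 * Real.log ((1 + r) / (1 - r) ^ 5)))
      (Set.Ioo (0 : ℝ) 1) ∧
    Filter.Tendsto
      (fun r : ℝ => (1 - r ^ 2) / r ^ 2 *
        (3 * r / (2 * (1 - r)) - 1 / 4 * Real.log ((1 + r) / (1 - r) ^ 5)))
      (nhdsWithin 1 (Set.Iio 1)) (nhds 3) := by
  have part1 : ∀ r : ℝ, 0 < r → r < 1 →
      (1 - r ^ 2) / r ^ 2 *
          (3 * r / (2 * (1 - r)) - 1 / 4 * Real.log ((1 + r) / (1 - r) ^ 5)) =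
        1 + r + ∑' n : ℕ,
          (5 / (2 * ((n : ℝ) + 2) * ((n : ℝ) + 4)) +
            (-1 : ℝ) ^ (n + 1) / (2 * ((n : ℝ) + 2) * ((n : ℝ) + 4))) * r ^ (n + 2) := by
    intro r h0 h1
    rw [(cesaro16_hasSum h0 h1).tsum_eq]
    ring
  refine ⟨part1, ?_, ?_⟩
  · intro a ha b hb hab
    simp only
    rw [part1 a ha.1 ha.2, part1 b hb.1 hb.2]
    have hsum : (∑' n : ℕ,
          (5 / (2 * ((n : ℝ) + 2) * ((n : ℝ) + 4)) +
            (-1 : ℝ) ^ (n + 1) / (2 * ((n : ℝ) + 2) * ((n : ℝ) + 4))) * a ^ (n + 2)) ≤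
        ∑' n : ℕ,
          (5 / (2 * ((n : ℝ) + 2) * ((n : ℝ) + 4)) +
            (-1 : ℝ) ^ (n + 1) / (2 * ((n : ℝ) + 2) * ((n : ℝ) + 4))) * b ^ (n + 2) := by
      refine Summable.tsum_le_tsum (fun n => ?_) (cesaro16_hasSum ha.1 ha.2).summable
        (cesaro16_hasSum hb.1 hb.2).summable
      have hc : 0 ≤ 5 / (2 * ((n : ℝ) + 2) * ((n : ℝ) + 4)) +
          (-1 : ℝ) ^ (n + 1) / (2 * ((n : ℝ) + 2) * ((n : ℝ) + 4)) := by
        have hD : (0:ℝ) < 2 * ((n : ℝ) + 2) * ((n : ℝ) + 4) := by positivity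
        rcases neg_one_pow_eq_or ℝ (n + 1) with h | h <;> rw [h]
        · positivity
        · have : 5 / (2 * ((n : ℝ) + 2) * ((n : ℝ) + 4)) +
              (-1 : ℝ) / (2 * ((n : ℝ) + 2) * ((n : ℝ) + 4)) =
              4 / (2 * ((n : ℝ) + 2) * ((n : ℝ) + 4)) := by ring
          rw [this]; positivity
      exact mul_le_mul_of_nonneg_left (pow_le_pow_left₀ ha.1.le hab.le _) hc
    linarith
  · have hg : ContinuousAt (fun r : ℝ =>
        (1 + r) * (3 / (2 * r)) - (1 + r) / (4 * r ^ 2) *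
          ((1 - r) * Real.log (1 + r) - 5 * ((1 - r) * Real.log (1 - r)))) 1 := by
      have c1 : Continuous (fun r : ℝ => (1 - r) * Real.log (1 - r)) :=
        Real.continuous_mul_log.comp (by continuity)
      have c2 : ContinuousAt (fun r : ℝ => Real.log (1 + r)) 1 :=
        (Real.continuousAt_log (by norm_num)).comp (by fun_prop)
      refine ContinuousAt.sub ?_ (ContinuousAt.mul ?_ ?_)
      · exact ContinuousAt.mul (by fun_prop) (ContinuousAt.div continuousAt_const
          (by fun_prop) (by norm_num))
      · exact ContinuousAt.div (by fun_prop) (by fun_prop) (by norm_num)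
      · exact ContinuousAt.sub (ContinuousAt.mul (by fun_prop) c2)
          (ContinuousAt.mul continuousAt_const c1.continuousAt)
    have hval : (fun r : ℝ =>
        (1 + r) * (3 / (2 * r)) - (1 + r) / (4 * r ^ 2) *
          ((1 - r) * Real.log (1 + r) - 5 * ((1 - r) * Real.log (1 - r)))) 1 = 3 := by
      norm_num
    have htend : Filter.Tendsto (fun r : ℝ =>
        (1 + r) * (3 / (2 * r)) - (1 + r) / (4 * r ^ 2) *
          ((1 - r) * Real.log (1 + r) - 5 * ((1 - r) * Real.log (1 - r))))
        (nhdsWithin 1 (Set.Iio 1)) (nhds 3) := by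
      have h' := hg.tendsto.mono_left (nhdsWithin_le_nhds (s := Set.Iio (1:ℝ)))
      convert h' using 2
      norm_num
    refine htend.congr' ?_
    filter_upwards [Ioo_mem_nhdsLT_of_mem (by norm_num : (1:ℝ) ∈ Set.Ioc 0 1)] with r hr
    have h0 : 0 < r := hr.1
    have h1 : r < 1 := hr.2
    have hr1 : (0:ℝ) < 1 - r := by linarith
    have hr2 : (0:ℝ) < 1 + r := by linarith
    have hlog : Real.log ((1 + r) / (1 - r) ^ 5) =
        Real.log (1 + r) - 5 * Real.log (1 - r) := by
      rw [Real.log_div (by positivity) (by positivity), Real.log_pow]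
      push_cast; ring
    rw [hlog]
    field_simp
    ring
end
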